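/- arXiv:1807.10514 — 5 statements merged into one kernel-verified Lean document; each statement's English description precedes it below -/
import Mathlib

section
/- The subdifferential of the graph total variation at zero equals the image of the unit ball of edge functions under the divergence operator: ∂J(0) = div(B₁) = {div H : H ∈ ℝ^E, |H(e)| ≤ 1 for all e ∈ E}. -/
open Finset MeasureTheory

noncomputable section

/-- The graph total variation `J(u) = ∑_{(v,w) ∈ E} |u(w) - u(v)|`. -/
def tvJ {V : Type*} (E : Finset (V × V)) (u : V → ℝ) : ℝ :=
  ∑ e ∈ E, |u e.2 - u e.1|

/-- The subdifferential of the graph total variation at `u`. -/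
def subdiffJ {V : Type*} [Fintype V] (E : Finset (V × V)) (u : V → ℝ) : Set (V → ℝ) :=
  {us | ∀ h : V → ℝ, (∑ v, (h v - u v) * us v) + tvJ E u ≤ tvJ E h}

/-- The divergence of an edge function `H`:
`(div H)(v) = ∑_{(w,v) ∈ E} H((w,v)) - ∑_{(v,w) ∈ E} H((v,w))`. -/
def gdiv {V : Type*} [DecidableEq V] (E : Finset (V × V)) (H : V × V → ℝ) : V → ℝ :=
  fun v => (∑ e ∈ E, if e.2 = v then H e else 0) - (∑ e ∈ E, if e.1 = v then H e else 0)

/-- The ℓ² norm on `ℝ^V`. -/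
def norm2 {V : Type*} [Fintype V] (u : V → ℝ) : ℝ :=
  Real.sqrt (∑ v, (u v) ^ 2)

/-- `u` minimizes `w ↦ ½‖f - w‖₂² + α J(w)` over `ℝ^V`. -/
def IsROFMinimizer {V : Type*} [Fintype V] (E : Finset (V × V)) (f : V → ℝ) (α : ℝ)
    (u : V → ℝ) : Prop :=
  ∀ w : V → ℝ,
    (1 / 2) * (∑ v, (f v - u v) ^ 2) + α * tvJ E u ≤
      (1 / 2) * (∑ v, (f v - w v) ^ 2) + α * tvJ E w

/-- `u : [0,∞) → ℝ^V` is a TV flow solution with datum `f`: it is Lipschitz on `[0,∞)`,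
`u(0) = f`, and `-u'(t) ∈ ∂J(u(t))` for almost every `t > 0`. -/
def IsTVFlowSolution {V : Type*} [Fintype V] (E : Finset (V × V)) (f : V → ℝ)
    (u : ℝ → V → ℝ) : Prop :=
  u 0 = f ∧ (∃ L : NNReal, LipschitzOnWith L u (Set.Ici 0)) ∧
    ∃ u' : ℝ → V → ℝ, ∀ᵐ t ∂(volume : Measure ℝ), 0 < t →
      HasDerivAt u (u' t) t ∧ (fun v => -(u' t v)) ∈ subdiffJ E (u t)


section Aux

variable {V : Type*} [Fintype V] [DecidableEq V]

lemma gdiv_key (E : Finset (V × V)) (H : V × V → ℝ) (h : V → ℝ) :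
    ∑ v, h v * gdiv E H v = ∑ e ∈ E, H e * (h e.2 - h e.1) := by
  unfold gdiv
  simp only [mul_sub, Finset.mul_sum, mul_ite, mul_zero]
  rw [Finset.sum_sub_distrib, Finset.sum_comm, Finset.sum_comm (s := Finset.univ)]
  simp [Finset.sum_ite_eq', mul_sub, mul_comm]

lemma gdiv_continuous (E : Finset (V × V)) : Continuous (gdiv E) := by
  unfold gdiv
  refine continuous_pi fun v => Continuous.sub ?_ ?_ <;>
    refine continuous_finset_sum _ fun e _ => ?_
  · by_cases hc : e.2 = v
    · simp only [hc, if_true]; exact continuous_apply e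
    · simp only [hc, if_false]; exact continuous_const
  · by_cases hc : e.1 = v
    · simp only [hc, if_true]; exact continuous_apply e
    · simp only [hc, if_false]; exact continuous_const

lemma ball_convex (E : Finset (V × V)) :
    Convex ℝ {H : V × V → ℝ | ∀ e ∈ E, |H e| ≤ 1} := by
  intro x hx y hy a b ha hb hab e he
  calc |(a • x + b • y) e| = |a * x e + b * y e| := rfl
    _ ≤ |a * x e| + |b * y e| := abs_add_le _ _
    _ = a * |x e| + b * |y e| := by
        rw [abs_mul, abs_mul, abs_of_nonneg ha, abs_of_nonneg hb]
    _ ≤ a * 1 + b * 1 := by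
        gcongr
        · exact hx e he
        · exact hy e he
    _ = 1 := by rw [mul_one, mul_one, hab]

lemma gdiv_smul_add (E : Finset (V × V)) (a b : ℝ) (H1 H2 : V × V → ℝ) :
    gdiv E (a • H1 + b • H2) = a • gdiv E H1 + b • gdiv E H2 := by
  funext v
  simp only [gdiv, Pi.add_apply, Pi.smul_apply, smul_eq_mul]
  have h1 : ∀ (e : V × V) (x : Prop) [Decidable x],
      (if x then a * H1 e + b * H2 e else 0) =
        a * (if x then H1 e else 0) + b * (if x then H2 e else 0) := by
    intros; split <;> simp
  simp only [h1, Finset.sum_add_distrib, ← Finset.mul_sum]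
  ring

lemma div_ball_convex (E : Finset (V × V)) :
    Convex ℝ (gdiv E '' {H : V × V → ℝ | ∀ e ∈ E, |H e| ≤ 1}) := by
  rintro _ ⟨H1, h1, rfl⟩ _ ⟨H2, h2, rfl⟩ a b ha hb hab
  exact ⟨a • H1 + b • H2, ball_convex E h1 h2 ha hb hab, gdiv_smul_add E a b H1 H2⟩

lemma div_ball_closed (E : Finset (V × V)) :
    IsClosed (gdiv E '' {H : V × V → ℝ | ∀ e ∈ E, |H e| ≤ 1}) := by
  set K : Set (V × V → ℝ) :=
    Set.univ.pi fun e => if e ∈ E then Set.Icc (-1 : ℝ) 1 else {0} with hK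
  have hKc : IsCompact K := by
    refine isCompact_univ_pi fun e => ?_
    by_cases he : e ∈ E <;> simp [he, isCompact_Icc, isCompact_singleton]
  have himg : gdiv E '' {H : V × V → ℝ | ∀ e ∈ E, |H e| ≤ 1} = gdiv E '' K := by
    apply Set.Subset.antisymm
    · rintro _ ⟨H, hH, rfl⟩
      refine ⟨fun e => if e ∈ E then H e else 0, ?_, ?_⟩
      · intro e _
        by_cases he : e ∈ E <;> simp [he, hK]
        exact abs_le.mp (hH e he)
      · funext v
        unfold gdiv
        congr 1 <;> refine Finset.sum_congr rfl fun e he => ?_ <;> simp [he]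
    · rintro _ ⟨H, hH, rfl⟩
      refine ⟨H, fun e he => ?_, rfl⟩
      have := hH e (Set.mem_univ e)
      simp [hK, he] at this
      exact abs_le.mpr this
  rw [himg]
  exact (hKc.image (gdiv_continuous E)).isClosed

end Aux

/-- `∂J(0) = div(B₁)`. -/
theorem subdiff_at_zero_eq_div_unit_ball
    {V : Type*} [Fintype V] [DecidableEq V] [Nonempty V] (E : Finset (V × V))
    (hE : ∀ v w : V, (v, w) ∈ E → (w, v) ∉ E)
    (hconn : (SimpleGraph.fromRel (fun v w : V => (v, w) ∈ E)).Connected) :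
    subdiffJ E (0 : V → ℝ) =
      gdiv E '' {H : V × V → ℝ | ∀ e ∈ E, |H e| ≤ 1} := by
  ext us
  constructor
  · -- hard direction: separation
    intro hus
    have hus' : ∀ h : V → ℝ, ∑ v, h v * us v ≤ ∑ e ∈ E, |h e.2 - h e.1| := by
      intro h
      have := hus h
      simpa [tvJ] using this
    by_contra h0
    obtain ⟨f, c, hfc, hcf⟩ :=
      geometric_hahn_banach_closed_point (div_ball_convex E) (div_ball_closed E) h0
    set h : V → ℝ := fun v => f (fun j => if v = j then 1 else 0) with hh
    have hf : ∀ x : V → ℝ, f x = ∑ v, h v * x v := by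
      intro x
      conv_lhs => rw [pi_eq_sum_univ x]
      rw [map_sum]
      exact Finset.sum_congr rfl fun v _ => by
        rw [_root_.map_smul, smul_eq_mul, mul_comm]
    set H : V × V → ℝ := fun e => if 0 ≤ h e.2 - h e.1 then 1 else -1 with hHdef
    have hH : ∀ e ∈ E, |H e| ≤ 1 := by
      intro e _
      simp only [hHdef]
      split_ifs <;> simp
    have h1 : f (gdiv E H) = ∑ e ∈ E, |h e.2 - h e.1| := by
      rw [hf, gdiv_key]
      refine Finset.sum_congr rfl fun e _ => ?_
      simp only [hHdef]
      split_ifs with hc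
      · rw [one_mul, abs_of_nonneg hc]
      · rw [abs_of_neg (lt_of_not_ge hc)]; ring
    have h2 := hus' h
    have h3 : f us = ∑ v, h v * us v := hf us
    have h4 := hfc _ ⟨H, hH, rfl⟩
    linarith
  · rintro ⟨H, hH, rfl⟩ h
    have hk := gdiv_key E H h
    simp only [subdiffJ, tvJ, Set.mem_setOf_eq, Pi.zero_apply, sub_zero, abs_zero,
      Finset.sum_const_zero, add_zero, sub_self] at *
    rw [hk]
    refine Finset.sum_le_sum fun e he => ?_
    calc H e * (h e.2 - h e.1) ≤ |H e * (h e.2 - h e.1)| := le_abs_self _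
      _ = |H e| * |h e.2 - h e.1| := abs_mul _ _
      _ ≤ 1 * |h e.2 - h e.1| := by gcongr; exact hH e he
      _ = _ := one_mul _
end
end

section
/- For every u ∈ ℝ^V the subdifferential of the graph total variation satisfies ∂J(u) = div(B_{1,u}), where B_{1,u} is the set of edge functions H ∈ ℝ^E such that for every edge (v,w) ∈ E: H((v,w)) = 1 if u(v) < u(w), H((v,w)) = −1 if u(v) > u(w), and H((v,w)) ∈ [−1,1] if u(v) = u(w). -/
open Finset MeasureTheory

noncomputable section

/-- The set `B_{1,u}` of edge functions adapted to `u`. -/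
def B1u {V : Type*} (E : Finset (V × V)) (u : V → ℝ) : Set (V × V → ℝ) :=
  {H | ∀ e ∈ E,
    (u e.1 < u e.2 → H e = 1) ∧
    (u e.1 > u e.2 → H e = -1) ∧
    (u e.1 = u e.2 → H e ∈ Set.Icc (-1 : ℝ) 1)}

/-- Key duality identity: `⟨g, div H⟩ = ∑_e H e (g e.2 - g e.1)`. -/
lemma sum_mul_gdiv {V : Type*} [Fintype V] [DecidableEq V]
    (E : Finset (V × V)) (H : V × V → ℝ) (g : V → ℝ) :
    ∑ v, g v * gdiv E H v = ∑ e ∈ E, H e * (g e.2 - g e.1) := by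
  have h1 : ∀ (p : V × V → V), ∑ v, ∑ e ∈ E, (if p e = v then g v * H e else 0)
      = ∑ e ∈ E, g (p e) * H e := by
    intro p
    rw [Finset.sum_comm]
    refine Finset.sum_congr rfl fun e _ => ?_
    have : ∀ v, (if p e = v then g v * H e else 0) = (if p e = v then g (p e) * H e else 0) := by
      intro v; split <;> simp_all
    simp only [this]
    rw [Finset.sum_ite_eq]
    simp
  calc ∑ v, g v * gdiv E H v
      = ∑ v, ((∑ e ∈ E, if e.2 = v then g v * H e else 0)
          - (∑ e ∈ E, if e.1 = v then g v * H e else 0)) := by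
        refine Finset.sum_congr rfl fun v _ => ?_
        unfold gdiv
        rw [mul_sub, Finset.mul_sum, Finset.mul_sum]
        congr 1 <;> exact Finset.sum_congr rfl fun e _ => by split <;> simp
    _ = ∑ e ∈ E, g e.2 * H e - ∑ e ∈ E, g e.1 * H e := by
        rw [Finset.sum_sub_distrib, h1 Prod.snd, h1 Prod.fst]
    _ = ∑ e ∈ E, H e * (g e.2 - g e.1) := by
        rw [← Finset.sum_sub_distrib]; exact Finset.sum_congr rfl fun e _ => by ring

/-- `gdiv E` as a linear map. -/
def gdivL {V : Type*} [DecidableEq V] (E : Finset (V × V)) : (V × V → ℝ) →ₗ[ℝ] (V → ℝ) where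
  toFun := gdiv E
  map_add' H1 H2 := by
    funext v
    simp only [gdiv, Pi.add_apply]
    have h2 : ∀ (p : V × V → V), ∑ e ∈ E, (if p e = v then H1 e + H2 e else 0)
        = (∑ e ∈ E, if p e = v then H1 e else 0) + (∑ e ∈ E, if p e = v then H2 e else 0) := by
      intro p
      rw [← Finset.sum_add_distrib]
      exact Finset.sum_congr rfl fun e _ => by split <;> simp
    rw [h2 Prod.snd, h2 Prod.fst]; ring
  map_smul' c H := by
    funext v
    simp only [gdiv, Pi.smul_apply, smul_eq_mul, RingHom.id_apply]
    have h2 : ∀ (p : V × V → V), ∑ e ∈ E, (if p e = v then c * H e else 0)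
        = c * ∑ e ∈ E, (if p e = v then H e else 0) := by
      intro p
      rw [Finset.mul_sum]
      exact Finset.sum_congr rfl fun e _ => by split <;> simp
    rw [h2 Prod.snd, h2 Prod.fst]; ring

lemma tvJ_triangle {V : Type*} (E : Finset (V × V)) (u g : V → ℝ) :
    tvJ E (u + g) ≤ tvJ E u + tvJ E g := by
  unfold tvJ
  rw [← Finset.sum_add_distrib]
  refine Finset.sum_le_sum fun e _ => ?_
  have h : (u + g) e.2 - (u + g) e.1 = (u e.2 - u e.1) + (g e.2 - g e.1) := by
    simp only [Pi.add_apply]; ring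
  rw [h]; exact abs_add_le _ _

/-- CLM representation on Pi type. -/
lemma clm_rep {V : Type*} [Fintype V] [DecidableEq V] (f : (V → ℝ) →L[ℝ] ℝ) (x : V → ℝ) :
    f x = ∑ v, x v * f (Pi.single v 1) := by
  have hx : x = ∑ v, x v • (Pi.single v (1:ℝ) : V → ℝ) := by
    funext w
    simp [Finset.sum_apply, Pi.single_apply]
  conv_lhs => rw [hx]
  rw [map_sum]
  simp [smul_eq_mul]

/-- `∂J(u) = div(B_{1,u})`. -/
theorem subdiff_eq_div_B1u
    {V : Type*} [Fintype V] [DecidableEq V] [Nonempty V] (E : Finset (V × V))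
    (hE : ∀ v w : V, (v, w) ∈ E → (w, v) ∉ E)
    (hconn : (SimpleGraph.fromRel (fun v w : V => (v, w) ∈ E)).Connected)
    (u : V → ℝ) :
    subdiffJ E u = gdiv E '' B1u E u := by
  ext us
  constructor
  · intro hus
    have hsub : ∀ g : V → ℝ, ∑ v, g v * us v ≤ tvJ E g := by
      intro g
      have h1 := hus (u + g)
      have h2 := tvJ_triangle E u g
      simp only [Pi.add_apply, add_sub_cancel_left] at h1
      linarith
    -- the compact convex set K and its image D
    set K : Set (V × V → ℝ) := Set.pi Set.univ (fun _ => Set.Icc (-1:ℝ) 1) with hKdef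
    have hKc : IsCompact K := isCompact_univ_pi fun _ => isCompact_Icc
    have hKconv : Convex ℝ K := convex_pi fun _ _ => convex_Icc _ _
    have hDconv : Convex ℝ (gdiv E '' K) := hKconv.linear_image (gdivL E)
    have hDclosed : IsClosed (gdiv E '' K) :=
      (hKc.image (gdivL E).continuous_of_finiteDimensional).isClosed
    have husD : us ∈ gdiv E '' K := by
      by_contra hnot
      obtain ⟨f, c, hfa, hfx⟩ := geometric_hahn_banach_closed_point hDconv hDclosed hnot
      set h : V → ℝ := fun v => f (Pi.single v 1) with hhdef
      set Hs : V × V → ℝ := fun e => if 0 ≤ h e.2 - h e.1 then 1 else -1 with hHsdef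
      have hHsK : Hs ∈ K := by
        rw [hKdef, Set.mem_univ_pi]
        intro e
        simp only [hHsdef]
        split <;> constructor <;> norm_num
      have hfHs : f (gdiv E Hs) = tvJ E h := by
        rw [clm_rep f (gdiv E Hs)]
        have : ∑ v, gdiv E Hs v * f (Pi.single v 1) = ∑ v, h v * gdiv E Hs v := by
          exact Finset.sum_congr rfl fun v _ => by rw [hhdef]; ring
        rw [this, sum_mul_gdiv]
        unfold tvJ
        refine Finset.sum_congr rfl fun e _ => ?_
        simp only [hHsdef]
        rcases le_or_gt 0 (h e.2 - h e.1) with hle | hlt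
        · rw [if_pos hle, abs_of_nonneg hle, one_mul]
        · rw [if_neg (not_le.mpr hlt), abs_of_neg hlt]; ring
      have hfus : f us = ∑ v, h v * us v := by
        rw [clm_rep f us]
        exact Finset.sum_congr rfl fun v _ => by rw [hhdef]; ring
      have hlt1 : f (gdiv E Hs) < c := hfa _ ⟨Hs, hHsK, rfl⟩
      have hle2 := hsub h
      rw [hfHs] at hlt1
      rw [hfus] at hfx
      linarith
    obtain ⟨H, hHK, hHdiv⟩ := husD
    -- ⟨u, us⟩ = J u
    have hge : tvJ E u ≤ ∑ v, u v * us v := by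
      have h0 := hus 0
      have htv0 : tvJ E (0 : V → ℝ) = 0 := by simp [tvJ]
      have hs : ∑ v, ((0:V → ℝ) v - u v) * us v = -∑ v, u v * us v := by
        rw [← Finset.sum_neg_distrib]
        exact Finset.sum_congr rfl fun v _ => by simp
      rw [htv0, hs] at h0
      linarith
    have heq : ∑ v, u v * us v = tvJ E u := le_antisymm (hsub u) hge
    have hsum : ∑ e ∈ E, H e * (u e.2 - u e.1) = ∑ e ∈ E, |u e.2 - u e.1| := by
      rw [← sum_mul_gdiv, hHdiv]
      exact heq
    have hHb : ∀ e, H e ∈ Set.Icc (-1:ℝ) 1 := by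
      rw [hKdef, Set.mem_univ_pi] at hHK
      exact hHK
    have hle : ∀ e ∈ E, H e * (u e.2 - u e.1) ≤ |u e.2 - u e.1| := by
      intro e _
      calc H e * (u e.2 - u e.1) ≤ |H e * (u e.2 - u e.1)| := le_abs_self _
        _ = |H e| * |u e.2 - u e.1| := abs_mul _ _
        _ ≤ 1 * |u e.2 - u e.1| := by
            have := abs_le.mpr ⟨(hHb e).1, (hHb e).2⟩
            exact mul_le_mul_of_nonneg_right this (abs_nonneg _)
        _ = |u e.2 - u e.1| := one_mul _
    have hterm : ∀ e ∈ E, H e * (u e.2 - u e.1) = |u e.2 - u e.1| :=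
      (Finset.sum_eq_sum_iff_of_le hle).mp hsum
    refine ⟨H, fun e he => ?_, hHdiv⟩
    refine ⟨fun hlt => ?_, fun hgt => ?_, fun _ => hHb e⟩
    · have hd : 0 < u e.2 - u e.1 := by linarith
      have ht := hterm e he
      rw [abs_of_pos hd] at ht
      have : H e * (u e.2 - u e.1) = 1 * (u e.2 - u e.1) := by linarith
      exact mul_right_cancel₀ (ne_of_gt hd) this
    · have hd : u e.2 - u e.1 < 0 := by simp only [gt_iff_lt] at hgt; linarith
      have ht := hterm e he
      rw [abs_of_neg hd] at ht
      have : H e * (u e.2 - u e.1) = (-1) * (u e.2 - u e.1) := by linarith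
      exact mul_right_cancel₀ (ne_of_lt hd) this
  · rintro ⟨H, hH, hHdiv⟩ h
    rw [← hHdiv]
    have hkey := sum_mul_gdiv E H (fun v => h v - u v)
    have hsplit : ∑ e ∈ E, H e * ((fun v => h v - u v) e.2 - (fun v => h v - u v) e.1)
        = ∑ e ∈ E, H e * (h e.2 - h e.1) - ∑ e ∈ E, H e * (u e.2 - u e.1) := by
      rw [← Finset.sum_sub_distrib]
      exact Finset.sum_congr rfl fun e _ => by simp; ring
    have hu : ∑ e ∈ E, H e * (u e.2 - u e.1) = tvJ E u := by
      unfold tvJ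
      refine Finset.sum_congr rfl fun e he => ?_
      obtain ⟨h1, h2, h3⟩ := hH e he
      rcases lt_trichotomy (u e.1) (u e.2) with hlt | heq | hgt
      · rw [h1 hlt, one_mul, abs_of_pos (by linarith)]
      · rw [heq]; simp
      · rw [h2 hgt, abs_of_neg (by linarith)]; ring
    have hh : ∑ e ∈ E, H e * (h e.2 - h e.1) ≤ tvJ E h := by
      unfold tvJ
      refine Finset.sum_le_sum fun e he => ?_
      have hb : |H e| ≤ 1 := by
        obtain ⟨h1, h2, h3⟩ := hH e he
        rcases lt_trichotomy (u e.1) (u e.2) with hlt | heq | hgt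
        · rw [h1 hlt]; norm_num
        · obtain ⟨ha, hb'⟩ := h3 heq; exact abs_le.mpr ⟨ha, hb'⟩
        · rw [h2 hgt]; norm_num
      calc H e * (h e.2 - h e.1) ≤ |H e * (h e.2 - h e.1)| := le_abs_self _
        _ = |H e| * |h e.2 - h e.1| := abs_mul _ _
        _ ≤ 1 * |h e.2 - h e.1| := mul_le_mul_of_nonneg_right hb (abs_nonneg _)
        _ = |h e.2 - h e.1| := one_mul _
    rw [hkey] at *
    rw [hsplit, hu]
    linarith
end
end

section
/- A bounded, closed and convex set Ω ⊆ ℝ^n is invariant φ-minimal if and only if Ω is the base polyhedron B(g) associated to some submodular set function g : 2^{{1,…,n}} → ℝ with g(∅) = 0. -/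
open Finset

noncomputable section

/-- `Ω ⊆ ℝ^n` is invariant φ-minimal: for every `a` there is `x_a ∈ Ω` minimizing
`∑ i, φ(x i - a i)` over `Ω` simultaneously for all convex `φ : ℝ → ℝ`. -/
def InvariantPhiMinimal {n : ℕ} (Ω : Set (Fin n → ℝ)) : Prop :=
  ∀ a : Fin n → ℝ, ∃ xa ∈ Ω, ∀ x ∈ Ω, ∀ φ : ℝ → ℝ, ConvexOn ℝ Set.univ φ →
    ∑ i, φ (xa i - a i) ≤ ∑ i, φ (x i - a i)

/-- A set function `g : 2^{1,…,n} → ℝ` is submodular. -/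
def Submodular {n : ℕ} (g : Finset (Fin n) → ℝ) : Prop :=
  ∀ A B : Finset (Fin n), g (A ∪ B) + g (A ∩ B) ≤ g A + g B

/-- The base polyhedron `B(g)` associated to a set function `g` with `g(∅)=0`:
`B(g) = {x ∈ P(g) : ∑_{i∈S} x_i = g(S)}` where
`P(g) = {x : ∑_{i∈A} x_i ≤ g(A) for all A ⊆ S}`. -/
def basePolyhedron {n : ℕ} (g : Finset (Fin n) → ℝ) : Set (Fin n → ℝ) :=
  {x | (∀ A : Finset (Fin n), ∑ i ∈ A, x i ≤ g A) ∧ ∑ i, x i = g Finset.univ}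


lemma convexOn_affine (c d : ℝ) : ConvexOn ℝ Set.univ (fun t : ℝ => c*t + d) := by
  refine ⟨convex_univ, ?_⟩
  intro x _ y _ a b _ _ hab
  simp only [smul_eq_mul]
  have h : a*(c*x+d)+b*(c*y+d) = c*(a*x+b*y)+d := by linear_combination d * hab
  linarith

lemma convexOn_posmax (b : ℝ) : ConvexOn ℝ Set.univ (fun t : ℝ => max (-t - b) 0) := by
  have h1 : ConvexOn ℝ Set.univ (fun t : ℝ => -t - b) := by
    have := convexOn_affine (-1) (-b)
    simpa [neg_mul, sub_eq_add_neg] using this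
  have h2 : ConvexOn ℝ Set.univ (fun _ : ℝ => (0:ℝ)) := convexOn_const 0 convex_univ
  exact h1.sup h2

section rd
variable (φ : ℝ → ℝ)

/-- right derivative of a convex function -/
def rd (y : ℝ) : ℝ := sInf ((fun h => (φ (y + h) - φ y) / h) '' Set.Ioi (0:ℝ))

lemma slope_adj (hφ : ConvexOn ℝ Set.univ φ) {u v w : ℝ} (huv : u < v) (hvw : v < w) :
    (φ v - φ u) / (v - u) ≤ (φ w - φ v) / (w - v) :=
  hφ.slope_mono_adjacent (Set.mem_univ u) (Set.mem_univ w) huv hvw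

lemma rd_bddBelow (hφ : ConvexOn ℝ Set.univ φ) (y : ℝ) :
    BddBelow ((fun h => (φ (y + h) - φ y) / h) '' Set.Ioi (0:ℝ)) := by
  refine ⟨(φ y - φ (y-1)) / (y - (y-1)), ?_⟩
  rintro s ⟨h, hh, rfl⟩
  have := slope_adj φ hφ (show y - 1 < y by linarith) (show y < y + h by linarith [Set.mem_Ioi.mp hh])
  calc (φ y - φ (y-1)) / (y - (y-1)) ≤ (φ (y+h) - φ y) / (y + h - y) := this
    _ = (φ (y+h) - φ y) / h := by ring_nf

lemma rd_nonempty (y : ℝ) :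
    ((fun h => (φ (y + h) - φ y) / h) '' Set.Ioi (0:ℝ)).Nonempty :=
  ⟨_, ⟨1, by norm_num, rfl⟩⟩

lemma rd_le_slope (hφ : ConvexOn ℝ Set.univ φ) (y : ℝ) {h : ℝ} (hh : 0 < h) :
    rd φ y ≤ (φ (y + h) - φ y) / h :=
  csInf_le (rd_bddBelow φ hφ y) ⟨h, hh, rfl⟩

lemma rd_subgradient (hφ : ConvexOn ℝ Set.univ φ) (y z : ℝ) : φ y + rd φ y * (z - y) ≤ φ z := by
  rcases lt_trichotomy z y with hlt | rfl | hgt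
  · -- z < y : slope(z,y) ≤ every right slope, so slope(z,y) ≤ rd
    have key : (φ y - φ z) / (y - z) ≤ rd φ y := by
      apply le_csInf (rd_nonempty φ y)
      rintro s ⟨h, hh, rfl⟩
      have := slope_adj φ hφ hlt (show y < y + h by linarith [Set.mem_Ioi.mp hh])
      simpa using this
    have hyz : (0:ℝ) < y - z := by linarith
    have : (φ y - φ z) ≤ rd φ y * (y - z) := by
      have := mul_le_mul_of_nonneg_right key (le_of_lt hyz)
      rwa [div_mul_cancel₀] at this
      exact ne_of_gt hyz
    nlinarith
  · simp
  · have key := rd_le_slope φ hφ y (show (0:ℝ) < z - y by linarith)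
    rw [show y + (z - y) = z by ring] at key
    have hzy : (0:ℝ) < z - y := by linarith
    have : rd φ y * (z - y) ≤ φ z - φ y := by
      have := mul_le_mul_of_nonneg_right key (le_of_lt hzy)
      rwa [div_mul_cancel₀] at this
      exact ne_of_gt hzy
    linarith

lemma rd_mono (hφ : ConvexOn ℝ Set.univ φ) : Monotone (rd φ) := by
  intro y y' hyy'
  rcases eq_or_lt_of_le hyy' with rfl | hlt
  · exact le_rfl
  · have h1 : rd φ y ≤ (φ y' - φ y) / (y' - y) := by
      have := rd_le_slope φ hφ y (show (0:ℝ) < y' - y by linarith)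
      rwa [show y + (y' - y) = y' by ring] at this
    have h2 : (φ y' - φ y) / (y' - y) ≤ rd φ y' := by
      apply le_csInf (rd_nonempty φ y')
      rintro s ⟨h, hh, rfl⟩
      have := slope_adj φ hφ hlt (show y' < y' + h by linarith [Set.mem_Ioi.mp hh])
      simpa using this
    linarith

end rd

/-- initial segments of Fin n -/
def seg (n : ℕ) (k : ℕ) : Finset (Fin n) := Finset.univ.filter (fun j => (j:ℕ) < k)

lemma seg_zero (n : ℕ) : seg n 0 = ∅ := by simp [seg]

lemma seg_univ (n : ℕ) : seg n n = Finset.univ := by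
  ext j; simp [seg, j.isLt]

lemma seg_succ (n : ℕ) (k : ℕ) (hk : k < n) :
    seg n (k+1) = insert ⟨k, hk⟩ (seg n k) := by
  ext j
  simp only [seg, mem_filter, mem_univ, true_and, mem_insert]
  constructor
  · intro h
    rcases Nat.lt_succ_iff_lt_or_eq.mp h with h' | h'
    · exact Or.inr h'
    · exact Or.inl (by ext; exact h')
  · rintro (rfl | h)
    · exact Nat.lt_succ_self k
    · exact Nat.lt_succ_of_lt h

lemma not_mem_seg (n k : ℕ) (hk : k < n) : (⟨k, hk⟩ : Fin n) ∉ seg n k := by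
  simp [seg]

lemma basePolyhedron_nonempty {n : ℕ} (g : Finset (Fin n) → ℝ)
    (hsub : Submodular g) (hg0 : g ∅ = 0) : (basePolyhedron g).Nonempty := by
  set x : Fin n → ℝ := fun i => g (seg n ((i:ℕ)+1)) - g (seg n (i:ℕ)) with hx
  have hseg_sum : ∀ k, k ≤ n → ∑ i ∈ seg n k, x i = g (seg n k) := by
    intro k
    induction k with
    | zero => intro _; simp [seg_zero, hg0]
    | succ m ih =>
      intro hm
      have hmn : m < n := hm
      rw [seg_succ n m hmn, Finset.sum_insert (not_mem_seg n m hmn), ih (le_of_lt hmn)]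
      simp only [hx]
      ring_nf
      rw [← seg_succ n m hmn]
      ring_nf
  have hkey : ∀ k, k ≤ n → ∀ A : Finset (Fin n), A ⊆ seg n k → ∑ i ∈ A, x i ≤ g A := by
    intro k
    induction k with
    | zero =>
      intro _ A hA
      have : A = ∅ := by
        rw [seg_zero] at hA; exact Finset.subset_empty.mp hA
      simp [this, hg0]
    | succ m ih =>
      intro hm A hA
      have hmn : m < n := hm
      by_cases he : (⟨m, hmn⟩ : Fin n) ∈ A
      · set e : Fin n := ⟨m, hmn⟩
        set A' : Finset (Fin n) := A.erase e with hA'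
        have hA'sub : A' ⊆ seg n m := by
          intro j hj
          have hj1 := Finset.mem_of_mem_erase hj
          have hj2 := Finset.ne_of_mem_erase hj
          have := hA hj1
          rw [seg_succ n m hmn] at this
          rcases Finset.mem_insert.mp this with h | h
          · exact absurd h hj2
          · exact h
        have hAeq : A = insert e A' := (Finset.insert_erase he).symm
        have hsum : ∑ i ∈ A, x i = ∑ i ∈ A', x i + x e := by
          rw [hAeq, Finset.sum_insert (Finset.notMem_erase e A)]; ring
        have hIH := ih (le_of_lt hmn) A' hA'sub
        -- submodularity: g (A' ∪ {e} ∪ seg m) + g (A' ∩ seg m ... )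
        have hsubm := hsub A (seg n m)
        have hU : A ∪ seg n m = seg n (m+1) := by
          rw [hAeq, seg_succ n m hmn]
          ext j
          simp only [Finset.mem_union, Finset.mem_insert]
          constructor
          · rintro (h | h)
            · rcases h with h | h
              · exact Or.inl h
              · exact Or.inr (hA'sub h)
            · exact Or.inr h
          · rintro (h | h)
            · exact Or.inl (Or.inl h)
            · exact Or.inr h
        have hI : A ∩ seg n m = A' := by
          ext j
          simp only [Finset.mem_inter, hA', Finset.mem_erase]
          constructor
          · rintro ⟨h1, h2⟩
            refine ⟨?_, h1⟩
            rintro rfl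
            exact not_mem_seg n m hmn h2
          · rintro ⟨h1, h2⟩
            exact ⟨h2, hA'sub (by rw [hA']; exact Finset.mem_erase.mpr ⟨h1, h2⟩)⟩
        rw [hU, hI] at hsubm
        have hxe : x e = g (seg n (m+1)) - g (seg n m) := rfl
        linarith
      · apply ih (le_of_lt hmn) A
        intro j hj
        have := hA hj
        rw [seg_succ n m hmn] at this
        rcases Finset.mem_insert.mp this with h | h
        · exact absurd h (by rintro rfl; exact he hj)
        · exact h
  refine ⟨x, ?_, ?_⟩
  · intro A
    exact hkey n le_rfl A (by rw [seg_univ]; exact Finset.subset_univ A)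
  · have := hseg_sum n le_rfl
    rwa [seg_univ] at this


def chainSet {n : ℕ} (τ : Equiv.Perm (Fin n)) (k : ℕ) : Finset (Fin n) :=
  Finset.univ.filter (fun i => ((τ.symm i : Fin n) : ℕ) < k)

lemma mem_chainSet {n : ℕ} {τ : Equiv.Perm (Fin n)} {k : ℕ} {i : Fin n} :
    i ∈ chainSet τ k ↔ ((τ.symm i : Fin n) : ℕ) < k := by simp [chainSet]

lemma chainSet_zero {n : ℕ} (τ : Equiv.Perm (Fin n)) : chainSet τ 0 = ∅ := by
  simp [chainSet]

lemma chainSet_eq_univ {n : ℕ} (τ : Equiv.Perm (Fin n)) {k : ℕ} (hk : n ≤ k) :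
    chainSet τ k = Finset.univ := by
  ext i; simp only [mem_chainSet, Finset.mem_univ, iff_true]
  exact lt_of_lt_of_le (τ.symm i).isLt hk

lemma chainSet_succ {n : ℕ} (τ : Equiv.Perm (Fin n)) {k : ℕ} (hk : k < n) :
    chainSet τ (k+1) = insert (τ ⟨k, hk⟩) (chainSet τ k) := by
  ext i
  simp only [mem_chainSet, Finset.mem_insert]
  constructor
  · intro h
    rcases Nat.lt_succ_iff_lt_or_eq.mp h with h' | h'
    · exact Or.inr h'
    · refine Or.inl ?_
      have : τ.symm i = ⟨k, hk⟩ := by ext; exact h'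
      rw [← this, Equiv.apply_symm_apply]
  · rintro (rfl | h)
    · rw [Equiv.symm_apply_apply]; exact Nat.lt_succ_self k
    · exact Nat.lt_succ_of_lt h

lemma not_mem_chainSet_self {n : ℕ} (τ : Equiv.Perm (Fin n)) {k : ℕ} (hk : k < n) :
    τ ⟨k, hk⟩ ∉ chainSet τ k := by
  simp [mem_chainSet, Equiv.symm_apply_apply]

/-- Abel-summation bound: if `c` is sorted along `τ`, level sets of the chain where `c`
strictly separates satisfy `∑ u ≤ ∑ v`, and total sums agree, then `∑ c (u - v) ≥ 0`. -/
lemma abel_bound {n : ℕ} (τ : Equiv.Perm (Fin n)) (c u v : Fin n → ℝ)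
    (h1 : Monotone (fun k : Fin n => c (τ k)))
    (h2 : ∀ k : ℕ, k ≤ n →
      (∀ i j : Fin n, i ∉ chainSet τ k → j ∈ chainSet τ k → c j < c i) →
      ∑ i ∈ chainSet τ k, u i ≤ ∑ i ∈ chainSet τ k, v i)
    (h3 : ∑ i, u i = ∑ i, v i) :
    0 ≤ ∑ i, c i * (u i - v i) := by
  have claim : ∀ k : ℕ, k ≤ n → ∀ γ : ℝ,
      (∀ i ∈ chainSet τ k, c i ≤ γ) → (∀ i : Fin n, i ∉ chainSet τ k → γ ≤ c i) →
      γ * (∑ i ∈ chainSet τ k, u i - ∑ i ∈ chainSet τ k, v i) ≤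
        ∑ i ∈ chainSet τ k, c i * (u i - v i) := by
    intro k
    induction k with
    | zero => intro _ γ _ _; simp [chainSet_zero]
    | succ m ih =>
      intro hm γ hγlo hγhi
      have hmn : m < n := hm
      set e : Fin n := τ ⟨m, hmn⟩ with he
      have hins := chainSet_succ τ hmn
      have hnot := not_mem_chainSet_self τ hmn
      have hsum_u : ∑ i ∈ chainSet τ (m+1), u i = u e + ∑ i ∈ chainSet τ m, u i := by
        rw [hins, Finset.sum_insert hnot]
      have hsum_v : ∑ i ∈ chainSet τ (m+1), v i = v e + ∑ i ∈ chainSet τ m, v i := by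
        rw [hins, Finset.sum_insert hnot]
      have hsum_c : ∑ i ∈ chainSet τ (m+1), c i * (u i - v i)
          = c e * (u e - v e) + ∑ i ∈ chainSet τ m, c i * (u i - v i) := by
        rw [hins, Finset.sum_insert hnot]
      -- sortedness facts
      have hlo : ∀ i ∈ chainSet τ m, c i ≤ c e := by
        intro i hi
        have ht := mem_chainSet.mp hi
        have : (τ.symm i) ≤ (⟨m, hmn⟩ : Fin n) := by
          rw [Fin.le_def]; exact Nat.le_of_lt ht
        have := h1 this
        simpa [Equiv.apply_symm_apply] using this
      have hhi : ∀ i : Fin n, i ∉ chainSet τ m → c e ≤ c i := by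
        intro i hi
        have ht : m ≤ ((τ.symm i : Fin n) : ℕ) := Nat.le_of_not_lt (fun h => hi (mem_chainSet.mpr h))
        have : (⟨m, hmn⟩ : Fin n) ≤ τ.symm i := by rw [Fin.le_def]; exact ht
        have := h1 this
        simpa [Equiv.apply_symm_apply] using this
      have hIH := ih (le_of_lt hmn) (c e) hlo hhi
      have hγe : c e ≤ γ := hγlo e (by rw [hins]; exact Finset.mem_insert_self _ _)
      -- main step
      have step : c e * (∑ i ∈ chainSet τ (m+1), u i - ∑ i ∈ chainSet τ (m+1), v i) ≤
          ∑ i ∈ chainSet τ (m+1), c i * (u i - v i) := by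
        rw [hsum_u, hsum_v, hsum_c]
        nlinarith [hIH]
      rcases eq_or_lt_of_le hγe with heq | hlt
      · rw [heq] at step; exact step
      · -- strict separation: chainSet τ (m+1) is separated by c
        have hsep : ∀ i j : Fin n, i ∉ chainSet τ (m+1) → j ∈ chainSet τ (m+1) → c j < c i := by
          intro i j hi hj
          have hj' : c j ≤ c e := by
            rw [hins] at hj
            rcases Finset.mem_insert.mp hj with rfl | hj'
            · exact le_rfl
            · exact hlo j hj'
          have hi' : γ ≤ c i := hγhi i hi
          linarith
        have hQ := h2 (m+1) hm hsep
        have : γ * (∑ i ∈ chainSet τ (m+1), u i - ∑ i ∈ chainSet τ (m+1), v i) ≤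
            c e * (∑ i ∈ chainSet τ (m+1), u i - ∑ i ∈ chainSet τ (m+1), v i) := by
          nlinarith
        linarith
  -- conclude
  rcases Nat.eq_zero_or_pos n with rfl | hn
  · simp
  · obtain ⟨i0, _, hi0⟩ := Finset.exists_max_image Finset.univ c ⟨⟨0, hn⟩, Finset.mem_univ _⟩
    have huniv := chainSet_eq_univ τ (le_refl n)
    have := claim n le_rfl (c i0)
      (by intro i _; exact hi0 i (Finset.mem_univ i))
      (by intro i hi; exact absurd (huniv ▸ Finset.mem_univ i) hi)
    rw [huniv] at this
    rw [h3] at this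
    simpa using this

lemma levelmax {n : ℕ} {Ω : Set (Fin n → ℝ)} {M : ℝ} (hM : ∀ x ∈ Ω, ∀ i, |x i| ≤ M)
    {a xa : Fin n → ℝ} (hxa : xa ∈ Ω)
    (hopt : ∀ x ∈ Ω, ∀ φ : ℝ → ℝ, ConvexOn ℝ Set.univ φ →
      ∑ i, φ (xa i - a i) ≤ ∑ i, φ (x i - a i))
    {b : ℝ} (hgap : ∀ i, b + M ≤ a i ∨ a i ≤ b - M) :
    ∀ x ∈ Ω, ∑ i ∈ Finset.univ.filter (fun i => b + M ≤ a i), x i ≤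
      ∑ i ∈ Finset.univ.filter (fun i => b + M ≤ a i), xa i := by
  classical
  intro x hx
  set T := Finset.univ.filter (fun i => b + M ≤ a i) with hT
  have key : ∀ z ∈ Ω, ∑ i, max (-(z i - a i) - b) 0 = ∑ i ∈ T, (a i - b) - ∑ i ∈ T, z i := by
    intro z hz
    rw [← Finset.sum_filter_add_sum_filter_not Finset.univ (fun i => b + M ≤ a i)
      (fun i => max (-(z i - a i) - b) 0)]
    have h1 : ∑ i ∈ T, max (-(z i - a i) - b) 0 = ∑ i ∈ T, ((a i - b) - z i) := by
      apply Finset.sum_congr rfl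
      intro i hi
      have hia : b + M ≤ a i := (Finset.mem_filter.mp hi).2
      have hzi := abs_le.mp (hM z hz i)
      have : -(z i - a i) - b = a i - b - z i := by ring
      rw [this]
      exact max_eq_left (by linarith [hzi.2])
    have h2 : ∑ i ∈ Finset.univ.filter (fun i => ¬ (b + M ≤ a i)),
        max (-(z i - a i) - b) 0 = 0 := by
      apply Finset.sum_eq_zero
      intro i hi
      have hia : ¬ (b + M ≤ a i) := (Finset.mem_filter.mp hi).2
      have hia' : a i ≤ b - M := (hgap i).resolve_left hia
      have hzi := abs_le.mp (hM z hz i)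
      exact max_eq_right (by linarith [hzi.1])
    rw [h1, h2, add_zero, Finset.sum_sub_distrib]
  have hineq := hopt x hx (fun t => max (-t - b) 0) (convexOn_posmax b)
  rw [key xa hxa, key x hx] at hineq
  linarith

lemma sumconst {n : ℕ} {Ω : Set (Fin n → ℝ)} {a xa : Fin n → ℝ}
    (hopt : ∀ x ∈ Ω, ∀ φ : ℝ → ℝ, ConvexOn ℝ Set.univ φ →
      ∑ i, φ (xa i - a i) ≤ ∑ i, φ (x i - a i)) :
    ∀ x ∈ Ω, ∑ i, x i = ∑ i, xa i := by
  intro x hx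
  have h1 := hopt x hx (fun t => 1*t + 0) (convexOn_affine 1 0)
  have h2 := hopt x hx (fun t => (-1)*t + 0) (convexOn_affine (-1) 0)
  simp only [one_mul, add_zero, neg_mul, neg_one_mul] at h1 h2
  rw [Finset.sum_sub_distrib, Finset.sum_sub_distrib] at h1
  have h2' : ∑ i, -(x i - a i) ≥ ∑ i, -(xa i - a i) := h2
  rw [Finset.sum_neg_distrib, Finset.sum_neg_distrib, Finset.sum_sub_distrib,
    Finset.sum_sub_distrib] at h2'
  linarith

theorem fwd {n : ℕ} (Ω : Set (Fin n → ℝ)) (hbdd : Bornology.IsBounded Ω)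
    (hclosed : IsClosed Ω) (hconv : Convex ℝ Ω) (hmin : InvariantPhiMinimal Ω) :
    ∃ g : Finset (Fin n) → ℝ, Submodular g ∧ g ∅ = 0 ∧ Ω = basePolyhedron g := by
  classical
  obtain ⟨x0, hx0, _⟩ := hmin 0
  obtain ⟨R, hR⟩ := isBounded_iff_forall_norm_le.mp hbdd
  set M := R + 1 with hMdef
  have hMbound : ∀ x ∈ Ω, ∀ i, |x i| ≤ M := by
    intro x hx i
    have h1 : ‖x i‖ ≤ ‖x‖ := norm_le_pi_norm x i
    have h2 := hR x hx
    simp only [Real.norm_eq_abs] at h1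
    simp only [hMdef]
    linarith
  have hMpos : 0 < M := by
    have h1 := hR x0 hx0
    have h2 : (0:ℝ) ≤ R := le_trans (norm_nonneg _) h1
    simp only [hMdef]; linarith
  have hcomp : IsCompact Ω := Metric.isCompact_of_isClosed_isBounded hclosed hbdd
  have hattain : ∀ A : Finset (Fin n), ∃ z ∈ Ω, ∀ x ∈ Ω, ∑ i ∈ A, x i ≤ ∑ i ∈ A, z i := by
    intro A
    obtain ⟨z, hz, hz2⟩ := hcomp.exists_isMaxOn ⟨x0, hx0⟩
      ((continuous_finset_sum A (fun i _ => continuous_apply i)).continuousOn)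
    exact ⟨z, hz, fun x hx => hz2 hx⟩
  choose zmax hzmem hzmax using hattain
  set g : Finset (Fin n) → ℝ := fun A => ∑ i ∈ A, zmax A i with hgdef
  have hle : ∀ x ∈ Ω, ∀ A, ∑ i ∈ A, x i ≤ g A := fun x hx A => hzmax A x hx
  have hattains : ∀ (A : Finset (Fin n)) (z : Fin n → ℝ), z ∈ Ω →
      (∀ x ∈ Ω, ∑ i ∈ A, x i ≤ ∑ i ∈ A, z i) → ∑ i ∈ A, z i = g A := by
    intro A z hz hmax
    exact le_antisymm (hle z hz A) (hmax (zmax A) (hzmem A))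
  refine ⟨g, ?_, by simp [hgdef], ?_⟩
  · -- Submodularity
    intro A B
    set a : Fin n → ℝ := fun i => if i ∈ A ∩ B then 4*M else if i ∈ A ∪ B then 2*M else 0
      with ha
    obtain ⟨xa, hxaΩ, hxopt⟩ := hmin a
    have haval : ∀ i, (i ∈ A ∩ B → a i = 4*M) ∧ (i ∉ A ∩ B → i ∈ A ∪ B → a i = 2*M) ∧
        (i ∉ A ∪ B → a i = 0) := by
      intro i
      refine ⟨fun h => by simp only [ha]; rw [if_pos h],
        fun h1 h2 => by simp only [ha]; rw [if_neg h1, if_pos h2], fun h => ?_⟩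
      have h1 : i ∉ A ∩ B := fun hc => h (Finset.mem_union_left B (Finset.mem_inter.mp hc).1)
      simp only [ha]; rw [if_neg h1, if_neg h]
    have hgap1 : ∀ i, 3*M + M ≤ a i ∨ a i ≤ 3*M - M := by
      intro i
      obtain ⟨e1, e2, e3⟩ := haval i
      by_cases h1 : i ∈ A ∩ B
      · left; rw [e1 h1]; linarith
      by_cases h2 : i ∈ A ∪ B
      · right; rw [e2 h1 h2]; linarith
      · right; rw [e3 h2]; linarith
    have hT1 : Finset.univ.filter (fun i => 3*M + M ≤ a i) = A ∩ B := by
      ext i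
      obtain ⟨e1, e2, e3⟩ := haval i
      simp only [Finset.mem_filter, Finset.mem_univ, true_and]
      constructor
      · intro hcond
        by_contra h1
        by_cases h2 : i ∈ A ∪ B
        · rw [e2 h1 h2] at hcond; linarith
        · rw [e3 h2] at hcond; linarith
      · intro h1; rw [e1 h1]; linarith
    have hgap2 : ∀ i, M + M ≤ a i ∨ a i ≤ M - M := by
      intro i
      obtain ⟨e1, e2, e3⟩ := haval i
      by_cases h1 : i ∈ A ∩ B
      · left; rw [e1 h1]; linarith
      by_cases h2 : i ∈ A ∪ B
      · left; rw [e2 h1 h2]; linarith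
      · right; rw [e3 h2]; linarith
    have hT2 : Finset.univ.filter (fun i => M + M ≤ a i) = A ∪ B := by
      ext i
      obtain ⟨e1, e2, e3⟩ := haval i
      simp only [Finset.mem_filter, Finset.mem_univ, true_and]
      constructor
      · intro hcond
        by_contra h2
        rw [e3 h2] at hcond; linarith
      · intro h2
        by_cases h1 : i ∈ A ∩ B
        · rw [e1 h1]; linarith
        · rw [e2 h1 h2]; linarith
    have hmax1 := levelmax hMbound hxaΩ hxopt hgap1
    rw [hT1] at hmax1
    have hmax2 := levelmax hMbound hxaΩ hxopt hgap2
    rw [hT2] at hmax2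
    have e1 : ∑ i ∈ A ∩ B, xa i = g (A ∩ B) := hattains _ xa hxaΩ hmax1
    have e2 : ∑ i ∈ A ∪ B, xa i = g (A ∪ B) := hattains _ xa hxaΩ hmax2
    have hsplit : ∑ i ∈ A ∪ B, xa i + ∑ i ∈ A ∩ B, xa i = ∑ i ∈ A, xa i + ∑ i ∈ B, xa i :=
      Finset.sum_union_inter
    have hA := hle xa hxaΩ A
    have hB := hle xa hxaΩ B
    linarith
  · -- Ω = basePolyhedron g
    refine subset_antisymm ?_ ?_
    · intro x hx
      refine ⟨fun A => hle x hx A, ?_⟩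
      obtain ⟨xc, hxcΩ, hxcopt⟩ := hmin 0
      have hs := sumconst hxcopt
      rw [hs x hx, ← hs (zmax Finset.univ) (hzmem Finset.univ)]
    · intro y hy
      by_contra hyΩ
      obtain ⟨f, u, hfy, hfΩ⟩ := geometric_hahn_banach_point_closed hconv hclosed hyΩ
      set c : Fin n → ℝ := fun i => f (fun j => if i = j then (1:ℝ) else 0) with hc
      have hfrep : ∀ v : Fin n → ℝ, f v = ∑ i, v i * c i := by
        intro v
        conv_lhs => rw [pi_eq_sum_univ v]
        rw [map_sum]
        apply Finset.sum_congr rfl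
        intro i _
        rw [map_smul, smul_eq_mul]
      set τ := Tuple.sort c with hτ
      have hmono : Monotone (fun k : Fin n => c (τ k)) := Tuple.monotone_sort c
      set a : Fin n → ℝ := fun i => 2*M*((n:ℝ) - ((τ.symm i : Fin n):ℕ)) with ha
      obtain ⟨xa, hxaΩ, hxopt⟩ := hmin a
      have hlevel : ∀ k : ℕ, k ≤ n → ∀ x ∈ Ω,
          ∑ i ∈ chainSet τ k, x i ≤ ∑ i ∈ chainSet τ k, xa i := by
        intro k hk
        set b : ℝ := 2*M*((n:ℝ)-(k:ℕ)) + M with hb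
        have hgap : ∀ i, b + M ≤ a i ∨ a i ≤ b - M := by
          intro i
          set t : ℕ := ((τ.symm i : Fin n) : ℕ) with htdef
          by_cases h : t < k
          · left
            have hcast : (t:ℝ) + 1 ≤ (k:ℝ) := by exact_mod_cast h
            simp only [ha, hb]
            nlinarith
          · right
            have hcast : (k:ℝ) ≤ (t:ℝ) := by exact_mod_cast Nat.le_of_not_lt h
            simp only [ha, hb]
            nlinarith
        have hT : Finset.univ.filter (fun i => b + M ≤ a i) = chainSet τ k := by
          ext i
          set t : ℕ := ((τ.symm i : Fin n) : ℕ) with htdef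
          simp only [Finset.mem_filter, Finset.mem_univ, true_and, mem_chainSet]
          constructor
          · intro hcond
            by_contra h
            have hcast : (k:ℝ) ≤ (t:ℝ) := by exact_mod_cast Nat.le_of_not_lt h
            simp only [ha, hb] at hcond
            nlinarith
          · intro h
            have hcast : (t:ℝ) + 1 ≤ (k:ℝ) := by exact_mod_cast h
            simp only [ha, hb]
            nlinarith
        have := levelmax hMbound hxaΩ hxopt hgap
        rwa [hT] at this
      have hatt : ∀ k : ℕ, k ≤ n → ∑ i ∈ chainSet τ k, xa i = g (chainSet τ k) :=
        fun k hk => hattains _ xa hxaΩ (hlevel k hk)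
      have habel : 0 ≤ ∑ i, c i * (y i - xa i) := by
        apply abel_bound τ c y xa hmono
        · intro k hk _
          calc ∑ i ∈ chainSet τ k, y i ≤ g (chainSet τ k) := hy.1 _
            _ = ∑ i ∈ chainSet τ k, xa i := (hatt k hk).symm
        · have h1 : ∑ i, y i = g Finset.univ := hy.2
          have h2 : ∑ i, xa i = g Finset.univ := by
            have := hatt n le_rfl
            rwa [chainSet_eq_univ τ le_rfl] at this
          rw [h1, h2]
      have hyv : f y = ∑ i, y i * c i := hfrep y
      have hxav : f xa = ∑ i, xa i * c i := hfrep xa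
      have hdiff : ∑ i, c i * (y i - xa i) = ∑ i, y i * c i - ∑ i, xa i * c i := by
        rw [← Finset.sum_sub_distrib]
        apply Finset.sum_congr rfl
        intro i _
        ring
      have hfxa := hfΩ xa hxaΩ
      rw [hdiff] at habel
      linarith

theorem bwd {n : ℕ} (Ω : Set (Fin n → ℝ)) (hbdd : Bornology.IsBounded Ω)
    (hclosed : IsClosed Ω) (g : Finset (Fin n) → ℝ) (hsub : Submodular g) (hg0 : g ∅ = 0)
    (hΩ : Ω = basePolyhedron g) : InvariantPhiMinimal Ω := by
  classical
  subst hΩ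
  intro a
  have hne : (basePolyhedron g).Nonempty := basePolyhedron_nonempty g hsub hg0
  have hcomp : IsCompact (basePolyhedron g) :=
    Metric.isCompact_of_isClosed_isBounded hclosed hbdd
  have hcont : Continuous (fun x : Fin n → ℝ => ∑ i, (x i - a i)^2) :=
    continuous_finset_sum _ fun i _ => ((continuous_apply i).sub continuous_const).pow 2
  obtain ⟨xs, hxs, hxsmin⟩ := hcomp.exists_isMinOn hne hcont.continuousOn
  have hxsmin' : ∀ x ∈ basePolyhedron g, ∑ i, (xs i - a i)^2 ≤ ∑ i, (x i - a i)^2 :=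
    fun x hx => hxsmin hx
  set y : Fin n → ℝ := fun i => xs i - a i with hy
  clear_value y
  set Tight : Finset (Fin n) → Prop := fun A => ∑ i ∈ A, xs i = g A with hTight
  have htU : Tight Finset.univ := hxs.2
  have ht0 : Tight ∅ := by simp [hTight, hg0]
  have htcap : ∀ A B, Tight A → Tight B → Tight (A ∩ B) := by
    intro A B hA hB
    have h1 := hxs.1 (A ∪ B)
    have h2 := hxs.1 (A ∩ B)
    have h3 := hsub A B
    have h4 : ∑ i ∈ A ∪ B, xs i + ∑ i ∈ A ∩ B, xs i = ∑ i ∈ A, xs i + ∑ i ∈ B, xs i :=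
      Finset.sum_union_inter
    simp only [hTight] at hA hB ⊢
    linarith
  have htcup : ∀ A B, Tight A → Tight B → Tight (A ∪ B) := by
    intro A B hA hB
    have h1 := hxs.1 (A ∪ B)
    have h2 := hxs.1 (A ∩ B)
    have h3 := hsub A B
    have h4 : ∑ i ∈ A ∪ B, xs i + ∑ i ∈ A ∩ B, xs i = ∑ i ∈ A, xs i + ∑ i ∈ B, xs i :=
      Finset.sum_union_inter
    simp only [hTight] at hA hB ⊢
    linarith
  -- exchange lemma
  have hexch : ∀ i j : Fin n, y i < y j → ∃ A, Tight A ∧ i ∈ A ∧ j ∉ A := by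
    intro i j hij
    by_contra hcon
    push_neg at hcon
    have hij_ne : i ≠ j := fun h => by rw [h] at hij; exact lt_irrefl _ hij
    set 𝒜 : Finset (Finset (Fin n)) := Finset.univ.filter (fun A => i ∈ A ∧ j ∉ A) with h𝒜
    have h𝒜ne : 𝒜.Nonempty := by
      refine ⟨{i}, ?_⟩
      rw [h𝒜, Finset.mem_filter]
      exact ⟨Finset.mem_univ _, Finset.mem_singleton_self i,
        fun h => hij_ne (Finset.mem_singleton.mp h).symm⟩
    have hslack : ∀ A ∈ 𝒜, 0 < g A - ∑ k ∈ A, xs k := by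
      intro A hA
      obtain ⟨hiA, hjA⟩ := (Finset.mem_filter.mp hA).2
      have hle := hxs.1 A
      rcases eq_or_lt_of_le hle with heq | hlt
      · exact absurd (hcon A heq hiA) hjA
      · linarith
    obtain ⟨A0, hA0mem, hA0min⟩ :=
      Finset.exists_min_image 𝒜 (fun A => g A - ∑ k ∈ A, xs k) h𝒜ne
    set ε : ℝ := min (g A0 - ∑ k ∈ A0, xs k) ((y j - y i)/2) with hε
    have hεle1 : ε ≤ g A0 - ∑ k ∈ A0, xs k := min_le_left _ _
    have hεle2 : ε ≤ (y j - y i)/2 := min_le_right _ _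
    have hεpos : 0 < ε := lt_min (hslack A0 hA0mem) (half_pos (sub_pos.mpr hij))
    clear_value ε
    set x' : Fin n → ℝ :=
      fun k => xs k + (if k = i then ε else 0) - (if k = j then ε else 0) with hx'
    have hsum' : ∀ A : Finset (Fin n), ∑ k ∈ A, x' k =
        ∑ k ∈ A, xs k + (if i ∈ A then ε else 0) - (if j ∈ A then ε else 0) := by
      intro A
      simp only [hx']
      rw [Finset.sum_sub_distrib, Finset.sum_add_distrib,
        Finset.sum_ite_eq' A i (fun _ => ε), Finset.sum_ite_eq' A j (fun _ => ε)]
    have hx'mem : x' ∈ basePolyhedron g := by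
      constructor
      · intro A
        rw [hsum' A]
        by_cases hiA : i ∈ A <;> by_cases hjA : j ∈ A
        · rw [if_pos hiA, if_pos hjA]; linarith [hxs.1 A]
        · rw [if_pos hiA, if_neg hjA]
          have hAmem : A ∈ 𝒜 := Finset.mem_filter.mpr ⟨Finset.mem_univ A, hiA, hjA⟩
          have h5 := hA0min A hAmem
          have hεle : ε ≤ g A - ∑ k ∈ A, xs k := le_trans hεle1 h5
          linarith
        · rw [if_neg hiA, if_pos hjA]; linarith [hxs.1 A]
        · rw [if_neg hiA, if_neg hjA]; linarith [hxs.1 A]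
      · rw [hsum' Finset.univ, if_pos (Finset.mem_univ i), if_pos (Finset.mem_univ j)]
        have := hxs.2
        linarith
    have hterm : ∀ k, (x' k - a k)^2 = (xs k - a k)^2 +
        ((if k = i then 2*ε*(y i) + ε^2 else 0) + (if k = j then -(2*ε*(y j)) + ε^2 else 0)) := by
      intro k
      simp only [hx', hy]
      by_cases hk1 : k = i
      · subst hk1
        rw [if_pos rfl, if_neg hij_ne, if_pos rfl, if_neg hij_ne]
        ring
      · by_cases hk2 : k = j
        · subst hk2
          rw [if_neg hk1, if_pos rfl, if_neg hk1, if_pos rfl]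
          ring
        · rw [if_neg hk1, if_neg hk2, if_neg hk1, if_neg hk2]
          ring
    have hobj : ∑ k, (x' k - a k)^2 < ∑ k, (xs k - a k)^2 := by
      rw [Finset.sum_congr rfl (fun k _ => hterm k), Finset.sum_add_distrib,
        Finset.sum_add_distrib,
        Finset.sum_ite_eq' Finset.univ i (fun _ => 2*ε*(y i) + ε^2),
        Finset.sum_ite_eq' Finset.univ j (fun _ => -(2*ε*(y j)) + ε^2),
        if_pos (Finset.mem_univ i), if_pos (Finset.mem_univ j)]
      have h2 : 2*ε ≤ y j - y i := by linarith
      nlinarith [mul_le_mul_of_nonneg_left h2 (le_of_lt hεpos), mul_pos hεpos hεpos]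
    exact absurd hobj (not_lt.mpr (hxsmin' x' hx'mem))
  -- membership in Finset.inf
  have mem_inf : ∀ (F : Finset (Fin n)) (f : Fin n → Finset (Fin n)) (x : Fin n),
      x ∈ F.inf f ↔ ∀ b ∈ F, x ∈ f b := by
    intro F f x
    induction F using Finset.induction_on with
    | empty => simp [Finset.inf_empty, Finset.top_eq_univ]
    | @insert b F hmem ih =>
      rw [Finset.inf_insert, Finset.inf_eq_inter, Finset.mem_inter, ih]
      constructor
      · rintro ⟨h1, h2⟩ b' hb'
        rcases Finset.mem_insert.mp hb' with rfl | hb'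
        · exact h1
        · exact h2 b' hb'
      · intro h
        exact ⟨h b (Finset.mem_insert_self _ _), fun b' hb' => h b' (Finset.mem_insert_of_mem hb')⟩
  have htinf : ∀ (F : Finset (Fin n)) (f : Fin n → Finset (Fin n)),
      (∀ b ∈ F, Tight (f b)) → Tight (F.inf f) := by
    intro F f
    induction F using Finset.induction_on with
    | empty => intro _; simpa [Finset.inf_empty, Finset.top_eq_univ] using htU
    | @insert b F hmem ih =>
      intro h
      rw [Finset.inf_insert, Finset.inf_eq_inter]
      exact htcap _ _ (h b (Finset.mem_insert_self _ _))
        (ih fun b' hb' => h b' (Finset.mem_insert_of_mem hb'))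
  have htsup : ∀ (F : Finset (Fin n)) (f : Fin n → Finset (Fin n)),
      (∀ b ∈ F, Tight (f b)) → Tight (F.sup f) := by
    intro F f
    induction F using Finset.induction_on with
    | empty => intro _; simpa [Finset.sup_empty, Finset.bot_eq_empty] using ht0
    | @insert b F hmem ih =>
      intro h
      rw [Finset.sup_insert, Finset.sup_eq_union]
      exact htcup _ _ (h b (Finset.mem_insert_self _ _))
        (ih fun b' hb' => h b' (Finset.mem_insert_of_mem hb'))
  -- level sets are tight
  have hlevelTight : ∀ s : ℝ, Tight (Finset.univ.filter (fun i => y i ≤ s)) := by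
    intro s
    set T := Finset.univ.filter (fun i => y i ≤ s) with hT
    have hAAex : ∀ i j : Fin n, ∃ A : Finset (Fin n),
        y i < y j → Tight A ∧ i ∈ A ∧ j ∉ A := by
      intro i j
      by_cases h : y i < y j
      · obtain ⟨A, h1, h2, h3⟩ := hexch i j h; exact ⟨A, fun _ => ⟨h1, h2, h3⟩⟩
      · exact ⟨∅, fun hc => absurd hc h⟩
    choose AA hAA using hAAex
    set B : Fin n → Finset (Fin n) :=
      fun i => (Finset.univ.filter (fun j => s < y j)).inf (fun j => AA i j) with hB
    have hTeq : T = T.sup B := by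
      apply Finset.Subset.antisymm
      · intro i hi
        apply Finset.mem_sup.mpr
        refine ⟨i, hi, ?_⟩
        rw [hB, mem_inf]
        intro j hj
        have hsj : s < y j := (Finset.mem_filter.mp hj).2
        have hyi : y i ≤ s := (Finset.mem_filter.mp hi).2
        exact (hAA i j (lt_of_le_of_lt hyi hsj)).2.1
      · intro x hx
        obtain ⟨i, hiT, hxB⟩ := Finset.mem_sup.mp hx
        by_contra hxT
        have hsx : s < y x := by
          have : ¬ (y x ≤ s) := fun hc => hxT (Finset.mem_filter.mpr ⟨Finset.mem_univ x, hc⟩)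
          linarith [lt_of_not_ge this]
        have hxmem : x ∈ Finset.univ.filter (fun j => s < y j) :=
          Finset.mem_filter.mpr ⟨Finset.mem_univ x, hsx⟩
        rw [hB, mem_inf] at hxB
        have h1 : x ∈ AA i x := hxB x hxmem
        have hyi : y i ≤ s := (Finset.mem_filter.mp hiT).2
        exact (hAA i x (lt_of_le_of_lt hyi hsx)).2.2 h1
    rw [hT] at hTeq ⊢
    rw [hTeq]
    apply htsup
    intro i hi
    apply htinf
    intro j hj
    exact (hAA i j (lt_of_le_of_lt (Finset.mem_filter.mp hi).2 (Finset.mem_filter.mp hj).2)).1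
  -- xs is the universal minimizer
  refine ⟨xs, hxs, ?_⟩
  intro x hx φ hφ
  set c : Fin n → ℝ := fun i => rd φ (y i) with hc
  set τ := Tuple.sort y with hτ
  have hymono : Monotone (fun k : Fin n => y (τ k)) := Tuple.monotone_sort y
  have hcmono : Monotone (fun k : Fin n => c (τ k)) := fun k l hkl => rd_mono φ hφ (hymono hkl)
  clear_value c τ
  have habel : 0 ≤ ∑ i, c i * (x i - xs i) := by
    apply abel_bound τ c x xs hcmono
    · intro k hk hsep
      rcases Nat.eq_zero_or_pos k with rfl | hkpos
      · simp [chainSet_zero]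
      rcases eq_or_lt_of_le hk with rfl | hklt
      · rw [chainSet_eq_univ τ le_rfl]
        rw [hx.2, hxs.2]
      · obtain ⟨m, rfl⟩ := Nat.exists_eq_succ_of_ne_zero (Nat.pos_iff_ne_zero.mp hkpos)
        have hmn : m < n := Nat.lt_of_succ_lt hklt
        set e := τ ⟨m, hmn⟩ with hedef
        have hSlevel : chainSet τ (m+1) = Finset.univ.filter (fun i => y i ≤ y e) := by
          ext i
          simp only [mem_chainSet, Finset.mem_filter, Finset.mem_univ, true_and]
          constructor
          · intro h
            have hle : (τ.symm i) ≤ (⟨m, hmn⟩ : Fin n) := by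
              rw [Fin.le_def]; exact Nat.lt_succ_iff.mp h
            have := hymono hle
            simpa [Equiv.apply_symm_apply, hedef] using this
          · intro h
            by_contra hnot
            have hiS : i ∉ chainSet τ (m+1) := fun hcc => hnot (mem_chainSet.mp hcc)
            have heS : e ∈ chainSet τ (m+1) := by
              rw [hedef, mem_chainSet, Equiv.symm_apply_apply]
              exact Nat.lt_succ_self m
            have h2 := hsep i e hiS heS
            have h3 : c i ≤ c e := by simp only [hc]; exact rd_mono φ hφ h
            linarith
        have ht := hlevelTight (y e)
        rw [hSlevel]
        calc ∑ i ∈ Finset.univ.filter (fun i => y i ≤ y e), x i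
            ≤ g (Finset.univ.filter (fun i => y i ≤ y e)) := hx.1 _
          _ = ∑ i ∈ Finset.univ.filter (fun i => y i ≤ y e), xs i := ht.symm
    · rw [hx.2, hxs.2]
  have hsg : ∀ i : Fin n, φ (xs i - a i) + c i * (x i - xs i) ≤ φ (x i - a i) := by
    intro i
    have := rd_subgradient φ hφ (y i) (x i - a i)
    have harith : (x i - a i) - y i = x i - xs i := by simp only [hy]; ring
    rw [harith] at this
    simpa [hy, hc] using this
  calc ∑ i, φ (xs i - a i) ≤ ∑ i, φ (xs i - a i) + ∑ i, c i * (x i - xs i) := by linarith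
    _ = ∑ i, (φ (xs i - a i) + c i * (x i - xs i)) := (Finset.sum_add_distrib).symm
    _ ≤ ∑ i, φ (x i - a i) := Finset.sum_le_sum (fun i _ => hsg i)

/-- a bounded, closed and convex set `Ω ⊆ ℝ^n` is invariant φ-minimal iff it is
the base polyhedron of some submodular set function `g` with `g(∅) = 0`. -/
theorem invariantPhiMinimal_iff_basePolyhedron
    {n : ℕ} (Ω : Set (Fin n → ℝ))
    (hbdd : Bornology.IsBounded Ω) (hclosed : IsClosed Ω) (hconv : Convex ℝ Ω) :
    InvariantPhiMinimal Ω ↔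
      ∃ g : Finset (Fin n) → ℝ, Submodular g ∧ g ∅ = 0 ∧ Ω = basePolyhedron g := by
  constructor
  · intro hmin
    exact fwd Ω hbdd hclosed hconv hmin
  · rintro ⟨g, hsub, hg0, hΩ⟩
    exact bwd Ω hbdd hclosed g hsub hg0 hΩ
end
end

section
/- For every f ∈ ℝ^V and α ≥ 0, the unique minimizer u_α of u ↦ ½‖f − u‖₂² + αJ(u) over ℝ^V is the unique element of minimal ℓ² norm in the set f − α∂J(0); that is, u_α ∈ f − α∂J(0) and ‖u_α‖₂ ≤ ‖u‖₂ for all u ∈ f − α∂J(0). -/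
open Finset MeasureTheory

noncomputable section

lemma tvJ_nonneg' {V : Type*} (E : Finset (V × V)) (u : V → ℝ) : 0 ≤ tvJ E u :=
  Finset.sum_nonneg fun _ _ => abs_nonneg _

lemma tvJ_zero' {V : Type*} (E : Finset (V × V)) : tvJ E (0 : V → ℝ) = 0 := by
  simp [tvJ]

lemma tvJ_convex' {V : Type*} (E : Finset (V × V)) (u h : V → ℝ) (t : ℝ)
    (ht0 : 0 ≤ t) (ht1 : t ≤ 1) :
    tvJ E (fun v => u v + t * (h v - u v)) ≤ (1 - t) * tvJ E u + t * tvJ E h := by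
  unfold tvJ
  rw [Finset.mul_sum, Finset.mul_sum, ← Finset.sum_add_distrib]
  refine Finset.sum_le_sum fun e _ => ?_
  have heq : (u e.2 + t * (h e.2 - u e.2)) - (u e.1 + t * (h e.1 - u e.1)) =
      (1 - t) * (u e.2 - u e.1) + t * (h e.2 - h e.1) := by ring
  rw [heq]
  calc |(1 - t) * (u e.2 - u e.1) + t * (h e.2 - h e.1)|
      ≤ |(1 - t) * (u e.2 - u e.1)| + |t * (h e.2 - h e.1)| := abs_add_le _ _
    _ = (1 - t) * |u e.2 - u e.1| + t * |h e.2 - h e.1| := by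
        rw [abs_mul, abs_mul, abs_of_nonneg (by linarith), abs_of_nonneg ht0]

lemma tvJ_add_le' {V : Type*} (E : Finset (V × V)) (u h : V → ℝ) :
    tvJ E (fun v => u v + h v) ≤ tvJ E u + tvJ E h := by
  unfold tvJ
  rw [← Finset.sum_add_distrib]
  refine Finset.sum_le_sum fun e _ => ?_
  have heq : (u e.2 + h e.2) - (u e.1 + h e.1) = (u e.2 - u e.1) + (h e.2 - h e.1) := by ring
  rw [heq]
  exact abs_add_le _ _

/-- Variational inequality for the ROF minimizer. -/
lemma rof_varineq {V : Type*} [Fintype V] (E : Finset (V × V)) (f : V → ℝ) (α : ℝ)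
    (hα : 0 ≤ α) (uα : V → ℝ) (huα : IsROFMinimizer E f α uα) (h : V → ℝ) :
    ∑ v, (h v - uα v) * (f v - uα v) + α * tvJ E uα ≤ α * tvJ E h := by
  set S : ℝ := ∑ v, (h v - uα v) * (f v - uα v) with hS
  set C : ℝ := ∑ v, (h v - uα v) ^ 2 with hC
  have hC0 : 0 ≤ C := Finset.sum_nonneg fun v _ => sq_nonneg _
  have key : ∀ t : ℝ, 0 < t → t ≤ 1 →
      S + α * tvJ E uα - α * tvJ E h ≤ t / 2 * C := by
    intro t ht0 ht1
    have h1 := huα (fun v => uα v + t * (h v - uα v))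
    have h2 := tvJ_convex' E uα h t ht0.le ht1
    have expand : ∑ v, (f v - (uα v + t * (h v - uα v))) ^ 2 =
        ∑ v, (f v - uα v) ^ 2 - 2 * t * S + t ^ 2 * C := by
      rw [hS, hC, Finset.mul_sum, Finset.mul_sum, ← Finset.sum_sub_distrib,
        ← Finset.sum_add_distrib]
      exact Finset.sum_congr rfl fun v _ => by ring
    rw [expand] at h1
    have h3 : α * tvJ E (fun v => uα v + t * (h v - uα v)) ≤
        α * ((1 - t) * tvJ E uα + t * tvJ E h) := mul_le_mul_of_nonneg_left h2 hα
    have h4 : t * (S + α * tvJ E uα - α * tvJ E h) ≤ t * (t / 2 * C) := by nlinarith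
    exact le_of_mul_le_mul_left h4 ht0
  have hfin : ∀ ε : ℝ, 0 < ε → S + α * tvJ E uα - α * tvJ E h ≤ 0 + ε := by
    intro ε hε
    have hC1 : (0:ℝ) < C + 1 := by linarith
    set t : ℝ := min 1 (ε / (C + 1)) with ht
    have ht0 : 0 < t := lt_min one_pos (div_pos hε hC1)
    have ht1 : t ≤ 1 := min_le_left _ _
    have h5 := key t ht0 ht1
    have h6 : t ≤ ε / (C + 1) := min_le_right _ _
    have h7 : t * (C + 1) ≤ ε := by
      calc t * (C + 1) ≤ (ε / (C + 1)) * (C + 1) :=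
            mul_le_mul_of_nonneg_right h6 hC1.le
        _ = ε := div_mul_cancel₀ _ hC1.ne'
    nlinarith
  have := le_of_forall_pos_le_add hfin
  linarith

/-- the ROF minimizer `u_α` is the element of minimal ℓ² norm in
`f - α ∂J(0)`. -/
theorem rof_minimizer_is_min_norm_element
    {V : Type*} [Fintype V] [DecidableEq V] [Nonempty V] (E : Finset (V × V))
    (hE : ∀ v w : V, (v, w) ∈ E → (w, v) ∉ E)
    (hconn : (SimpleGraph.fromRel (fun v w : V => (v, w) ∈ E)).Connected)
    (f : V → ℝ) (α : ℝ) (hα : 0 ≤ α)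
    (uα : V → ℝ) (huα : IsROFMinimizer E f α uα) :
    uα ∈ (fun us => f - α • us) '' subdiffJ E (0 : V → ℝ) ∧
      ∀ u ∈ (fun us => f - α • us) '' subdiffJ E (0 : V → ℝ), norm2 uα ≤ norm2 u := by
  have key := rof_varineq E f α hα uα huα
  -- a useful consequence: for any g, ∑ g v * (f v - uα v) ≤ α * tvJ E g
  have key0 : ∀ g : V → ℝ, ∑ v, g v * (f v - uα v) ≤ α * tvJ E g := by
    intro g
    have h1 := key (fun v => uα v + g v)
    have h2 : tvJ E (fun v => uα v + g v) ≤ tvJ E uα + tvJ E g := tvJ_add_le' E uα g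
    have h3 : α * tvJ E (fun v => uα v + g v) ≤ α * (tvJ E uα + tvJ E g) :=
      mul_le_mul_of_nonneg_left h2 hα
    have h4 : ∑ v, (uα v + g v - uα v) * (f v - uα v) = ∑ v, g v * (f v - uα v) :=
      Finset.sum_congr rfl fun v _ => by ring
    rw [h4] at h1
    linarith
  rcases eq_or_lt_of_le hα with hα0 | hαpos
  · -- α = 0 case: uα = f
    have hf : uα = f := by
      have h1 := key0 (fun v => f v - uα v)
      rw [← hα0, zero_mul] at h1
      have h2 : ∑ v, (f v - uα v) * (f v - uα v) = ∑ v, (f v - uα v) ^ 2 :=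
        Finset.sum_congr rfl fun v _ => by ring
      rw [h2] at h1
      have h3 : ∀ v ∈ Finset.univ (α := V), (f v - uα v) ^ 2 = 0 := by
        rw [← Finset.sum_eq_zero_iff_of_nonneg fun v _ => sq_nonneg _]
        exact le_antisymm h1 (Finset.sum_nonneg fun v _ => sq_nonneg _)
      funext v
      have := h3 v (Finset.mem_univ v)
      have := pow_eq_zero_iff (n := 2) (by norm_num) |>.mp this
      linarith
    constructor
    · refine ⟨0, ?_, ?_⟩
      · intro h
        simp only [Pi.zero_apply, mul_zero, Finset.sum_const_zero, tvJ_zero', zero_add]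
        exact tvJ_nonneg' E h
      · show f - α • (0 : V → ℝ) = uα
        funext v
        simp [← hα0, hf]
    · rintro u ⟨us, _, rfl⟩
      have heq : (fun us => f - α • us) us = uα := by
        funext v
        simp [← hα0, hf]
      rw [heq]
  · -- α > 0 case
    have hαne : α ≠ 0 := ne_of_gt hαpos
    set us : V → ℝ := fun v => (f v - uα v) / α with hus
    have husmem : us ∈ subdiffJ E (0 : V → ℝ) := by
      intro h
      rw [tvJ_zero']
      have h1 := key0 h
      have h2 : ∑ v, (h v - (0 : V → ℝ) v) * us v = (∑ v, h v * (f v - uα v)) / α := by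
        rw [Finset.sum_div]
        refine Finset.sum_congr rfl fun v _ => ?_
        simp only [hus, Pi.zero_apply, sub_zero]
        field_simp
      rw [h2, add_zero, div_le_iff₀ hαpos]
      linarith [h1]
    have himg : f - α • us = uα := by
      funext v
      simp only [Pi.sub_apply, Pi.smul_apply, smul_eq_mul, hus]
      field_simp
      ring
    constructor
    · exact ⟨us, husmem, himg⟩
    · rintro u ⟨ws, hws, rfl⟩
      show norm2 uα ≤ norm2 (f - α • ws)
      -- S1 : ∑ uα v * ws v ≤ tvJ E uα
      have S1 : ∑ v, uα v * ws v ≤ tvJ E uα := by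
        have := hws uα
        rw [tvJ_zero'] at this
        simp only [Pi.zero_apply, sub_zero] at this
        linarith
      -- S2 : α * tvJ E uα ≤ ∑ v, uα v * (f v - uα v)
      have S2 : α * tvJ E uα ≤ ∑ v, uα v * (f v - uα v) := by
        have h1 := key 0
        rw [tvJ_zero', mul_zero] at h1
        have h2 : ∑ v, ((0:V → ℝ) v - uα v) * (f v - uα v) =
            -∑ v, uα v * (f v - uα v) := by
          rw [← Finset.sum_neg_distrib]
          refine Finset.sum_congr rfl fun v _ => ?_
          simp only [Pi.zero_apply]
          ring
        rw [h2] at h1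
        linarith
      -- inner product bound: ∑ uα² ≤ ∑ uα * (f - α ws)
      have hinner : ∑ v, uα v ^ 2 ≤ ∑ v, uα v * (f v - α * ws v) := by
        have e1 : ∑ v, uα v * (f v - α * ws v) =
            ∑ v, uα v * (f v - uα v) - α * ∑ v, uα v * ws v + ∑ v, uα v ^ 2 := by
          rw [Finset.mul_sum, ← Finset.sum_sub_distrib, ← Finset.sum_add_distrib]
          exact Finset.sum_congr rfl fun v _ => by ring
        have e2 : α * ∑ v, uα v * ws v ≤ α * tvJ E uα :=
          mul_le_mul_of_nonneg_left S1 hα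
        linarith
      -- Cauchy-Schwarz
      have hcs : ∑ v, uα v * (f v - α * ws v) ≤
          Real.sqrt (∑ v, uα v ^ 2) * Real.sqrt (∑ v, (f v - α * ws v) ^ 2) :=
        Real.sum_mul_le_sqrt_mul_sqrt _ _ _
      have hxy : ∑ v, uα v ^ 2 ≤
          Real.sqrt (∑ v, uα v ^ 2) * Real.sqrt (∑ v, (f v - α * ws v) ^ 2) :=
        le_trans hinner hcs
      have hnorm2u : norm2 (f - α • ws) = Real.sqrt (∑ v, (f v - α * ws v) ^ 2) := by
        unfold norm2
        congr 1
      rw [hnorm2u]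
      unfold norm2
      set x := Real.sqrt (∑ v, uα v ^ 2) with hx
      set y := Real.sqrt (∑ v, (f v - α * ws v) ^ 2) with hy
      have hx0 : 0 ≤ x := Real.sqrt_nonneg _
      have hy0 : 0 ≤ y := Real.sqrt_nonneg _
      have hxsq : x ^ 2 = ∑ v, uα v ^ 2 :=
        Real.sq_sqrt (Finset.sum_nonneg fun v _ => sq_nonneg _)
      rcases eq_or_lt_of_le hx0 with hx0' | hx0'
      · rw [← hx0']; exact hy0
      · have : x * x ≤ x * y := by nlinarith
        exact le_of_mul_le_mul_left this hx0'
end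
end

section
/- Let 0 ≤ β₁ < β₂ and suppose the ROF minimizers satisfy ∂J(u_{β₁}) = ∂J(u_{β₂}). Then for every α with β₁ < α < β₂, the ROF minimizer u_α is the convex combination u_α = ((β₂ − α)/(β₂ − β₁)) u_{β₁} + ((α − β₁)/(β₂ − β₁)) u_{β₂}. -/
open Finset MeasureTheory

noncomputable section

section Aux
variable {V : Type*} [Fintype V]

lemma tvJ_combo (E : Finset (V × V)) {a b : ℝ} (ha : 0 ≤ a) (hb : 0 ≤ b)
    (u w : V → ℝ) :
    tvJ E (fun x => a * u x + b * w x) ≤ a * tvJ E u + b * tvJ E w := by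
  simp only [tvJ, Finset.mul_sum, ← Finset.sum_add_distrib]
  refine Finset.sum_le_sum fun e _ => ?_
  rw [show a * u e.2 + b * w e.2 - (a * u e.1 + b * w e.1)
      = a * (u e.2 - u e.1) + b * (w e.2 - w e.1) by ring]
  calc |a * (u e.2 - u e.1) + b * (w e.2 - w e.1)|
      ≤ |a * (u e.2 - u e.1)| + |b * (w e.2 - w e.1)| := abs_add_le _ _
    _ = a * |u e.2 - u e.1| + b * |w e.2 - w e.1| := by
        rw [abs_mul, abs_mul, abs_of_nonneg ha, abs_of_nonneg hb]

lemma subdiff_ip_eq {E : Finset (V × V)} {u v : V → ℝ} (hv : v ∈ subdiffJ E u) :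
    (∑ x, u x * v x) = tvJ E u := by
  have h0 := hv (fun _ => 0)
  have h2 := hv (fun x => 2 * u x)
  have hJ0 : tvJ E (fun _ => (0:ℝ)) = 0 := by simp [tvJ]
  have hJ2 : tvJ E (fun x => 2 * u x) = 2 * tvJ E u := by
    simp only [tvJ, Finset.mul_sum]
    refine Finset.sum_congr rfl fun e _ => ?_
    rw [show 2 * u e.2 - 2 * u e.1 = 2 * (u e.2 - u e.1) by ring, abs_mul]
    norm_num
  rw [hJ0] at h0
  rw [hJ2] at h2
  have e0 : (∑ x, ((0:ℝ) - u x) * v x) = -∑ x, u x * v x := by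
    rw [← Finset.sum_neg_distrib]
    exact Finset.sum_congr rfl fun x _ => by ring
  have e2 : (∑ x, ((2 * u x) - u x) * v x) = ∑ x, u x * v x :=
    Finset.sum_congr rfl fun x _ => by ring
  rw [e0] at h0
  rw [e2] at h2
  linarith

lemma subdiff_ip_le {E : Finset (V × V)} {u v : V → ℝ} (hv : v ∈ subdiffJ E u)
    (h : V → ℝ) : (∑ x, h x * v x) ≤ tvJ E h := by
  have h1 := hv h
  have e1 : (∑ x, (h x - u x) * v x) = (∑ x, h x * v x) - ∑ x, u x * v x := by
    rw [← Finset.sum_sub_distrib]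
    exact Finset.sum_congr rfl fun x _ => by ring
  rw [e1, subdiff_ip_eq hv] at h1
  linarith

lemma isROFMin_of_subdiff {E : Finset (V × V)} {f u v : V → ℝ} {α : ℝ} (hα : 0 ≤ α)
    (hv : v ∈ subdiffJ E u) (heq : ∀ x, f x - u x = α * v x) :
    IsROFMinimizer E f α u := by
  intro h
  have h1 := hv h
  have key : ∀ x : V, (f x - h x)^2
      = (f x - u x)^2 + (h x - u x)^2 - 2 * α * ((h x - u x) * v x) := by
    intro x
    rw [show 2 * α * ((h x - u x) * v x) = 2 * ((h x - u x) * (α * v x)) by ring, ← heq x]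
    ring
  have hsum : ∑ x, (f x - h x)^2
      = ∑ x, (f x - u x)^2 + ∑ x, (h x - u x)^2 - 2 * α * ∑ x, (h x - u x) * v x := by
    simp only [key]
    rw [Finset.sum_sub_distrib, Finset.sum_add_distrib, Finset.mul_sum]
  have hpos : (0:ℝ) ≤ ∑ x, (h x - u x)^2 := Finset.sum_nonneg fun x _ => sq_nonneg _
  have h2 : α * ((∑ x, (h x - u x) * v x) + tvJ E u) ≤ α * tvJ E h :=
    mul_le_mul_of_nonneg_left h1 hα
  nlinarith [h2, hsum, hpos]

lemma subdiff_of_isROFMin {E : Finset (V × V)} {f u : V → ℝ} {α : ℝ} (hα : 0 < α)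
    (hu : IsROFMinimizer E f α u) :
    (fun x => (f x - u x) / α) ∈ subdiffJ E u := by
  intro h
  set S : ℝ := ∑ x, (h x - u x)^2 with hSdef
  have hS0 : 0 ≤ S := Finset.sum_nonneg fun x _ => sq_nonneg _
  set A : ℝ := ∑ x, (h x - u x) * (f x - u x) with hAdef
  have key : ∀ t : ℝ, 0 ≤ t → t ≤ 1 →
      t * A + α * t * tvJ E u ≤ α * t * tvJ E h + t^2/2 * S := by
    intro t ht0 ht1
    have hmin := hu (fun x => u x + t * (h x - u x))
    have hq : ∑ x, (f x - (u x + t * (h x - u x)))^2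
        = ∑ x, (f x - u x)^2 - 2*t*A + t^2*S := by
      have hpt : ∀ x : V, (f x - (u x + t * (h x - u x)))^2
          = (f x - u x)^2 - 2*t*((h x - u x)*(f x - u x)) + t^2*(h x - u x)^2 :=
        fun x => by ring
      simp only [hpt]
      rw [Finset.sum_add_distrib, Finset.sum_sub_distrib, ← Finset.mul_sum, ← Finset.mul_sum,
        hAdef, hSdef]
    have hJ : tvJ E (fun x => u x + t * (h x - u x))
        ≤ (1 - t) * tvJ E u + t * tvJ E h := by
      have hc := tvJ_combo E (sub_nonneg.2 ht1) ht0 u h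
      have hfe : (fun x => u x + t * (h x - u x)) = (fun x => (1-t) * u x + t * h x) := by
        funext x; ring
      rw [hfe]; exact hc
    have hJ' : α * tvJ E (fun x => u x + t * (h x - u x))
        ≤ α * tvJ E u - α * t * tvJ E u + α * t * tvJ E h := by
      nlinarith [mul_le_mul_of_nonneg_left hJ hα.le]
    nlinarith [hmin, hq, hJ']
  have hfin : A + α * tvJ E u - α * tvJ E h ≤ 0 := by
    by_contra hcon
    push_neg at hcon
    set B : ℝ := A + α * tvJ E u - α * tvJ E h with hBdef
    have hB : 0 < B := hcon
    by_cases hSB : S ≤ B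
    · have h1 := key 1 zero_le_one le_rfl
      nlinarith
    · push_neg at hSB
      have hSpos : 0 < S := lt_trans hB hSB
      have ht0 : 0 ≤ B / S := le_of_lt (div_pos hB hSpos)
      have ht1 : B / S ≤ 1 := by
        rw [div_le_one hSpos]; exact hSB.le
      have h1 := key (B/S) ht0 ht1
      have h2 : (B/S) * B ≤ (B/S)^2/2 * S := by nlinarith [h1]
      have h3 : (B/S) * B = B^2 / S := by field_simp
      have h4 : (B/S)^2/2 * S = B^2 / S / 2 := by field_simp
      rw [h3, h4] at h2
      have h5 : 0 < B^2 / S := div_pos (by positivity) hSpos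
      linarith
  have hsum : ∑ x, (h x - u x) * ((f x - u x) / α) = A / α := by
    rw [hAdef, Finset.sum_div]
    exact Finset.sum_congr rfl fun x _ => by ring
  rw [hsum]
  rw [show A / α + tvJ E u ≤ tvJ E h ↔ A / α ≤ tvJ E h - tvJ E u by constructor <;> intro <;> linarith,
    div_le_iff₀ hα]
  nlinarith

lemma rof_unique {E : Finset (V × V)} {f : V → ℝ} {α : ℝ} (hα : 0 ≤ α) {u w : V → ℝ}
    (hu : IsROFMinimizer E f α u) (hw : IsROFMinimizer E f α w) : u = w := by
  have h1 := hu w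
  have h2 := hw u
  have hz := hu (fun x => (u x + w x)/2)
  have hq : ∑ x, (f x - (u x + w x)/2)^2
      = (∑ x, (f x - u x)^2)/2 + (∑ x, (f x - w x)^2)/2 - (∑ x, (u x - w x)^2)/4 := by
    have hpt : ∀ x : V, (f x - (u x + w x)/2)^2
        = (f x - u x)^2/2 + (f x - w x)^2/2 - (u x - w x)^2/4 := fun x => by ring
    simp only [hpt]
    rw [Finset.sum_sub_distrib, Finset.sum_add_distrib, Finset.sum_div, Finset.sum_div,
      Finset.sum_div]
  have hJ : tvJ E (fun x => (u x + w x)/2) ≤ tvJ E u / 2 + tvJ E w / 2 := by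
    have hc := tvJ_combo E (by norm_num : (0:ℝ) ≤ 1/2) (by norm_num : (0:ℝ) ≤ 1/2) u w
    have hfe : (fun x => (u x + w x)/2) = (fun x => (1/2) * u x + (1/2) * w x) := by
      funext x; ring
    rw [hfe]; linarith
  have hJ' : α * tvJ E (fun x => (u x + w x)/2)
      ≤ α * tvJ E u / 2 + α * tvJ E w / 2 := by
    nlinarith [mul_le_mul_of_nonneg_left hJ hα]
  have hD : ∑ x, (u x - w x)^2 ≤ 0 := by linarith
  have hD0 : ∑ x, (u x - w x)^2 = 0 :=
    le_antisymm hD (Finset.sum_nonneg fun x _ => sq_nonneg _)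
  funext x
  have := (Finset.sum_eq_zero_iff_of_nonneg (fun x _ => sq_nonneg (u x - w x))).1 hD0 x
    (Finset.mem_univ x)
  have := pow_eq_zero_iff (n := 2) (by norm_num) |>.1 this
  linarith [this]

end Aux

/-- if `∂J(u_{β₁}) = ∂J(u_{β₂})` for `0 ≤ β₁ < β₂`, then for `β₁ < α < β₂`
the ROF minimizer `u_α` is the corresponding convex combination of `u_{β₁}` and `u_{β₂}`. -/
theorem rof_minimizer_convex_combination
    {V : Type*} [Fintype V] [DecidableEq V] [Nonempty V] (E : Finset (V × V))
    (hE : ∀ v w : V, (v, w) ∈ E → (w, v) ∉ E)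
    (hconn : (SimpleGraph.fromRel (fun v w : V => (v, w) ∈ E)).Connected)
    (f : V → ℝ) (β₁ β₂ : ℝ) (hβ₁ : 0 ≤ β₁) (hβ : β₁ < β₂)
    (u₁ u₂ : V → ℝ) (hu₁ : IsROFMinimizer E f β₁ u₁) (hu₂ : IsROFMinimizer E f β₂ u₂)
    (hsub : subdiffJ E u₁ = subdiffJ E u₂)
    (α : ℝ) (hα₁ : β₁ < α) (hα₂ : α < β₂)
    (uα : V → ℝ) (huα : IsROFMinimizer E f α uα) :
    uα = ((β₂ - α) / (β₂ - β₁)) • u₁ + ((α - β₁) / (β₂ - β₁)) • u₂ := by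
  have hδ : 0 < β₂ - β₁ := sub_pos.2 hβ
  have hαpos : 0 < α := lt_of_le_of_lt hβ₁ hα₁
  have hβ₂pos : 0 < β₂ := lt_trans hαpos hα₂
  set l : ℝ := (β₂ - α) / (β₂ - β₁) with hl
  set m : ℝ := (α - β₁) / (β₂ - β₁) with hm
  have hl0 : 0 < l := div_pos (sub_pos.2 hα₂) hδ
  have hm0 : 0 < m := div_pos (sub_pos.2 hα₁) hδ
  have hlm : l + m = 1 := by rw [hl, hm, ← add_div, div_eq_one_iff_eq hδ.ne']; ring
  have hlmα : l * β₁ + m * β₂ = α := by rw [hl, hm]; field_simp; ring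
  -- subgradient from u₂
  set v₂ : V → ℝ := fun x => (f x - u₂ x) / β₂ with hv₂def
  have hv₂ : v₂ ∈ subdiffJ E u₂ := subdiff_of_isROFMin hβ₂pos hu₂
  have hv₂' : v₂ ∈ subdiffJ E u₁ := hsub ▸ hv₂
  have hfu₂ : ∀ x, f x - u₂ x = β₂ * v₂ x := fun x => by
    rw [hv₂def]; field_simp
  -- subgradient from u₁, handling β₁ = 0
  obtain ⟨v₁, hv₁, hfu₁⟩ : ∃ v₁, v₁ ∈ subdiffJ E u₁ ∧ ∀ x, f x - u₁ x = β₁ * v₁ x := by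
    rcases eq_or_lt_of_le hβ₁ with h0 | hpos
    · refine ⟨v₂, hv₂', fun x => ?_⟩
      have hf : IsROFMinimizer E f β₁ f := by
        intro w
        rw [← h0]
        simp only [zero_mul, add_zero]
        have : ∑ x, (f x - f x)^2 = 0 := by simp
        rw [this]
        have : (0:ℝ) ≤ ∑ x, (f x - w x)^2 := Finset.sum_nonneg fun x _ => sq_nonneg _
        linarith
      have := rof_unique hβ₁ hu₁ hf
      rw [this, ← h0]; ring
    · exact ⟨fun x => (f x - u₁ x) / β₁, subdiff_of_isROFMin hpos hu₁,
        fun x => by field_simp⟩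
  have hv₁' : v₁ ∈ subdiffJ E u₂ := hsub ▸ hv₁
  -- the convex combination
  set w : V → ℝ := fun x => l * u₁ x + m * u₂ x with hwdef
  set vv : V → ℝ := fun x => (l * β₁ / α) * v₁ x + (m * β₂ / α) * v₂ x with hvvdef
  have hcoef : l * β₁ / α + m * β₂ / α = 1 := by
    rw [← add_div, hlmα, div_self hαpos.ne']
  have hc1 : 0 ≤ l * β₁ / α := by positivity
  have hc2 : 0 ≤ m * β₂ / α := by positivity
  -- inner products
  have ip1 : (∑ x, u₁ x * v₁ x) = tvJ E u₁ := subdiff_ip_eq hv₁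
  have ip2 : (∑ x, u₂ x * v₁ x) = tvJ E u₂ := subdiff_ip_eq hv₁'
  have ip3 : (∑ x, u₁ x * v₂ x) = tvJ E u₁ := subdiff_ip_eq hv₂'
  have ip4 : (∑ x, u₂ x * v₂ x) = tvJ E u₂ := subdiff_ip_eq hv₂
  have ipw1 : (∑ x, w x * v₁ x) = l * tvJ E u₁ + m * tvJ E u₂ := by
    have e : (∑ x, w x * v₁ x) = ∑ x, (l * (u₁ x * v₁ x) + m * (u₂ x * v₁ x)) :=
      Finset.sum_congr rfl fun x _ => by simp only [hwdef]; ring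
    rw [e, Finset.sum_add_distrib, ← Finset.mul_sum, ← Finset.mul_sum, ip1, ip2]
  have ipw2 : (∑ x, w x * v₂ x) = l * tvJ E u₁ + m * tvJ E u₂ := by
    have e : (∑ x, w x * v₂ x) = ∑ x, (l * (u₁ x * v₂ x) + m * (u₂ x * v₂ x)) :=
      Finset.sum_congr rfl fun x _ => by simp only [hwdef]; ring
    rw [e, Finset.sum_add_distrib, ← Finset.mul_sum, ← Finset.mul_sum, ip3, ip4]
  -- J w = l J u₁ + m J u₂
  have hJw_le : tvJ E w ≤ l * tvJ E u₁ + m * tvJ E u₂ := tvJ_combo E hl0.le hm0.le u₁ u₂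
  have hJw_ge : l * tvJ E u₁ + m * tvJ E u₂ ≤ tvJ E w := by
    rw [← ipw1]; exact subdiff_ip_le hv₁ w
  have hJw : tvJ E w = l * tvJ E u₁ + m * tvJ E u₂ := le_antisymm hJw_le hJw_ge
  -- vv ∈ ∂J(w)
  have hvvw : vv ∈ subdiffJ E w := by
    intro h
    have e1 : (∑ x, (h x - w x) * vv x)
        = (l * β₁ / α) * (∑ x, h x * v₁ x) + (m * β₂ / α) * (∑ x, h x * v₂ x)
          - ((l * β₁ / α) * (∑ x, w x * v₁ x) + (m * β₂ / α) * (∑ x, w x * v₂ x)) := by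
      rw [Finset.mul_sum, Finset.mul_sum, Finset.mul_sum, Finset.mul_sum,
        ← Finset.sum_add_distrib, ← Finset.sum_add_distrib, ← Finset.sum_sub_distrib]
      exact Finset.sum_congr rfl fun x _ => by rw [hvvdef]; ring
    have b1 := subdiff_ip_le hv₁ h
    have b2 := subdiff_ip_le hv₂' h
    have b1' := mul_le_mul_of_nonneg_left b1 hc1
    have b2' := mul_le_mul_of_nonneg_left b2 hc2
    rw [e1, ipw1, ipw2, hJw]
    have hK : l * β₁ / α * (l * tvJ E u₁ + m * tvJ E u₂)
        + m * β₂ / α * (l * tvJ E u₁ + m * tvJ E u₂) = l * tvJ E u₁ + m * tvJ E u₂ := by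
      rw [← add_mul, hcoef, one_mul]
    have hKh : l * β₁ / α * tvJ E h + m * β₂ / α * tvJ E h = tvJ E h := by
      rw [← add_mul, hcoef, one_mul]
    linarith [b1', b2', hK, hKh]
  -- f - w = α vv
  have hfw : ∀ x, f x - w x = α * vv x := by
    intro x
    rw [hwdef, hvvdef]
    have e1 := hfu₁ x
    have e2 := hfu₂ x
    have : f x - (l * u₁ x + m * u₂ x) = l * (f x - u₁ x) + m * (f x - u₂ x) := by
      have : l * f x + m * f x = f x := by rw [← add_mul, hlm, one_mul]
      linarith [this]
    rw [this, e1, e2]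
    field_simp
  have hwmin : IsROFMinimizer E f α w := isROFMin_of_subdiff hαpos.le hvvw hfw
  have := rof_unique hαpos.le huα hwmin
  rw [this]
  funext x
  simp [hwdef, hl, hm]
end
end
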